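/- arXiv:1406.2405 — 11 statements merged into one kernel-verified Lean document; each statement's English description precedes it below -/
import Mathlib

section
/- Suppose there exist α ∈ (0,1) and real numbers c_1, …, c_n such that for every i ∈ I: 1 − α c_i > 0 and −B_i + ((α − 1)/2)·σ_i² + Σ_{j ≠ i} q_{ij}·(c_i − c_j)/(1 − α c_i) < 0 (Assumption (i), used for asymptotic stability of the vertex x = 0). Let V(x,i) = (1 − α c_i)·x^α. Then there exists δ ∈ (0,1) such that for every i ∈ I and every x ∈ (0,δ), (L V)(x,i) < 0. -/
open Finset Real

/-- The switched replicator generator. -/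
noncomputable def switchedGen {n : ℕ} (A B σ : Fin n → ℝ) (q : Fin n → Fin n → ℝ)
    (V : ℝ → Fin n → ℝ) (x : ℝ) (i : Fin n) : ℝ :=
  x * (1 - x) * (-B i + (A i + B i) * x) * deriv (fun y => V y i) x
    + (σ i ^ 2 / 2) * x ^ 2 * (1 - x) ^ 2 * deriv (deriv (fun y => V y i)) x
    + ∑ j ∈ Finset.univ.filter (fun j => j ≠ i), q i j * (V x j - V x i)

theorem stmt_4 {n : ℕ} (hn : 0 < n) (A B σ : Fin n → ℝ) (q : Fin n → Fin n → ℝ)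
    (hq : ∀ i j : Fin n, i ≠ j → 0 ≤ q i j)
    (α : ℝ) (hα : α ∈ Set.Ioo (0 : ℝ) 1) (c : Fin n → ℝ)
    (hc : ∀ i, 1 - α * c i > 0)
    (hass : ∀ i : Fin n,
      -B i + ((α - 1) / 2) * σ i ^ 2
        + ∑ j ∈ Finset.univ.filter (fun j => j ≠ i),
            q i j * (c i - c j) / (1 - α * c i) < 0)
    (V : ℝ → Fin n → ℝ) (hV : V = fun x i => (1 - α * c i) * x ^ α) :
    ∃ δ ∈ Set.Ioo (0 : ℝ) 1, ∀ i : Fin n, ∀ x ∈ Set.Ioo (0 : ℝ) δ,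
      switchedGen A B σ q V x i < 0 := by
  obtain ⟨hα0, hα1⟩ := hα
  -- the polynomial factor
  set g : Fin n → ℝ → ℝ := fun i x =>
    α * (1 - α * c i) * ((1 - x) * (-B i + (A i + B i) * x)
      + ((α - 1) / 2) * σ i ^ 2 * (1 - x) ^ 2)
    + α * ∑ j ∈ Finset.univ.filter (fun j => j ≠ i), q i j * (c i - c j) with hg
  -- first derivative on (0,∞)
  have hd1 : ∀ i : Fin n, ∀ y : ℝ, 0 < y →
      HasDerivAt (fun z => V z i) ((1 - α * c i) * (α * y ^ (α - 1))) y := by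
    intro i y hy
    subst hV
    exact (Real.hasDerivAt_rpow_const (Or.inl hy.ne')).const_mul _
  have hderiv1 : ∀ i : Fin n, ∀ y : ℝ, 0 < y →
      deriv (fun z => V z i) y = (1 - α * c i) * (α * y ^ (α - 1)) :=
    fun i y hy => (hd1 i y hy).deriv
  have hderiv2 : ∀ i : Fin n, ∀ y : ℝ, 0 < y →
      deriv (deriv (fun z => V z i)) y
        = (1 - α * c i) * (α * ((α - 1) * y ^ (α - 2))) := by
    intro i y hy
    have heq : deriv (fun z => V z i) =ᶠ[nhds y]
        (fun z => (1 - α * c i) * (α * z ^ (α - 1))) := by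
      filter_upwards [isOpen_Ioi.mem_nhds hy] with z hz
      exact hderiv1 i z hz
    rw [heq.deriv_eq]
    have h2 : HasDerivAt (fun z : ℝ => (1 - α * c i) * (α * z ^ (α - 1)))
        ((1 - α * c i) * (α * ((α - 1) * y ^ (α - 1 - 1)))) y :=
      ((Real.hasDerivAt_rpow_const (Or.inl hy.ne')).const_mul α).const_mul _
    rw [h2.deriv, show α - 1 - 1 = α - 2 by ring]
  -- factorization
  have hfact : ∀ i : Fin n, ∀ x : ℝ, 0 < x →
      switchedGen A B σ q V x i = x ^ α * g i x := by
    intro i x hx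
    have hx' : x ≠ 0 := hx.ne'
    have e1 : x ^ (α - 1) = x ^ α / x := by
      rw [Real.rpow_sub hx, Real.rpow_one]
    have e2 : x ^ (α - 2) = x ^ α / x ^ 2 := by
      rw [Real.rpow_sub hx, show ((2:ℝ)) = ((2:ℕ):ℝ) by norm_num, Real.rpow_natCast]
    have hsum : ∑ j ∈ Finset.univ.filter (fun j => j ≠ i), q i j * (V x j - V x i)
        = (∑ j ∈ Finset.univ.filter (fun j => j ≠ i), q i j * (c i - c j)) * (α * x ^ α) := by
      rw [Finset.sum_mul]
      refine Finset.sum_congr rfl fun j _ => ?_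
      subst hV; ring
    rw [switchedGen, hderiv1 i x hx, hderiv2 i x hx, hsum, e1, e2, hg]
    field_simp
  -- g i 0 < 0
  have hg0 : ∀ i : Fin n, g i 0 < 0 := by
    intro i
    have hci := hc i
    have hsum : ∑ j ∈ Finset.univ.filter (fun j => j ≠ i), q i j * (c i - c j)
        = (1 - α * c i) * ∑ j ∈ Finset.univ.filter (fun j => j ≠ i),
            q i j * (c i - c j) / (1 - α * c i) := by
      rw [Finset.mul_sum]
      refine Finset.sum_congr rfl fun j _ => ?_
      field_simp
      exact (mul_div_cancel_right₀ _ (by rw [mul_comm]; exact hci.ne')).symm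
    have key := hass i
    have : g i 0 = α * (1 - α * c i) * (-B i + ((α - 1) / 2) * σ i ^ 2
        + ∑ j ∈ Finset.univ.filter (fun j => j ≠ i),
            q i j * (c i - c j) / (1 - α * c i)) := by
      rw [hg]; simp only; rw [hsum]; ring
    rw [this]
    exact mul_neg_of_pos_of_neg (by positivity) key
  -- continuity ⇒ eventually negative, uniformly in i
  have hev : ∀ᶠ x in nhds (0:ℝ), ∀ i : Fin n, g i x < 0 := by
    rw [Filter.eventually_all]
    intro i
    have hcont : ContinuousAt (g i) 0 := by fun_prop
    exact hcont.eventually_lt_const (hg0 i)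
  rw [Metric.eventually_nhds_iff] at hev
  obtain ⟨ε, hε, hball⟩ := hev
  refine ⟨min (ε / 2) (1 / 2), ⟨by positivity, lt_of_le_of_lt (min_le_right _ _) (by norm_num)⟩,
    fun i x hx => ?_⟩
  obtain ⟨hx0, hxδ⟩ := hx
  have hxε : dist x 0 < ε := by
    rw [Real.dist_eq, sub_zero, abs_of_pos hx0]
    exact lt_of_lt_of_le (lt_of_lt_of_le hxδ (min_le_left _ _)) (by linarith)
  have := hball hxε i
  rw [hfact i x hx0]
  exact mul_neg_of_pos_of_neg (Real.rpow_pos_of_pos hx0 α) this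
end

section
/- Suppose there exist α ∈ (0,1) and real numbers c_1, …, c_n such that for every i ∈ I: 1 + α c_i > 0 and −B_i + ((−α − 1)/2)·σ_i² + Σ_{j ≠ i} q_{ij}·(c_i − c_j)/(1 + α c_i) > 0 (Assumption (ii), used for instability of the vertex x = 0). Let V(x,i) = (1 + α c_i)·x^{−α}. Then there exists δ ∈ (0,1) such that for every i ∈ I and every x ∈ (0,δ), (L V)(x,i) < 0. -/
open Finset Real

theorem stmt_5 {n : ℕ} (hn : 0 < n) (A B σ : Fin n → ℝ) (q : Fin n → Fin n → ℝ)
    (hq : ∀ i j : Fin n, i ≠ j → 0 ≤ q i j)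
    (α : ℝ) (hα : α ∈ Set.Ioo (0 : ℝ) 1) (c : Fin n → ℝ)
    (hc : ∀ i, 1 + α * c i > 0)
    (hass : ∀ i : Fin n,
      -B i + ((-α - 1) / 2) * σ i ^ 2
        + ∑ j ∈ Finset.univ.filter (fun j => j ≠ i),
            q i j * (c i - c j) / (1 + α * c i) > 0)
    (V : ℝ → Fin n → ℝ) (hV : V = fun x i => (1 + α * c i) * x ^ (-α)) :
    ∃ δ ∈ Set.Ioo (0 : ℝ) 1, ∀ i : Fin n, ∀ x ∈ Set.Ioo (0 : ℝ) δ,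
      switchedGen A B σ q V x i < 0 := by
  obtain ⟨hα0, hα1⟩ := hα
  set E : Fin n → ℝ → ℝ := fun i x =>
    (1 + α * c i) * ((1 - x) * (-B i + (A i + B i) * x)
        + ((-α - 1) / 2) * σ i ^ 2 * (1 - x) ^ 2)
      + ∑ j ∈ Finset.univ.filter (fun j => j ≠ i), q i j * (c i - c j) with hEdef
  have hE0 : ∀ i, 0 < E i 0 := by
    intro i
    have hci := hc i
    have h' : 0 < -B i + ((-α - 1) / 2) * σ i ^ 2
        + (∑ j ∈ Finset.univ.filter (fun j => j ≠ i), q i j * (c i - c j)) / (1 + α * c i) := by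
      rw [Finset.sum_div] at *
      exact hass i
    have h2 := mul_pos hci h'
    have hS : (1 + α * c i) *
        ((∑ j ∈ Finset.univ.filter (fun j => j ≠ i), q i j * (c i - c j)) / (1 + α * c i))
        = ∑ j ∈ Finset.univ.filter (fun j => j ≠ i), q i j * (c i - c j) := by
      field_simp
    have hE0' : E i 0 = (1 + α * c i) * (-B i + ((-α - 1) / 2) * σ i ^ 2)
        + ∑ j ∈ Finset.univ.filter (fun j => j ≠ i), q i j * (c i - c j) := by
      simp [hEdef]
    rw [hE0']
    nlinarith [h2, hS]
  have hcont : ∀ i, Continuous (E i) := by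
    intro i
    rw [hEdef]
    fun_prop
  have hδi : ∀ i : Fin n, ∃ δ > 0, ∀ y : ℝ, |y| < δ → 0 < E i y := by
    intro i
    have hev : ∀ᶠ y in nhds (0 : ℝ), 0 < E i y :=
      ((hcont i).tendsto 0).eventually (eventually_gt_nhds (hE0 i))
    rw [Metric.eventually_nhds_iff] at hev
    obtain ⟨ε, hε, hball⟩ := hev
    exact ⟨ε, hε, fun y hy => hball (by simpa [Real.dist_eq] using hy)⟩
  choose δf hδfpos hδfprop using hδi
  have hne : (Finset.univ : Finset (Fin n)).Nonempty := ⟨⟨0, hn⟩, Finset.mem_univ _⟩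
  refine ⟨min (1 / 2) (Finset.univ.inf' hne δf), ⟨?_, ?_⟩, ?_⟩
  · apply lt_min (by norm_num)
    rw [Finset.lt_inf'_iff]
    exact fun i _ => hδfpos i
  · exact lt_of_le_of_lt (min_le_left _ _) (by norm_num)
  · intro i x hx
    obtain ⟨hx0, hxδ⟩ := hx
    have hxδi : x < δf i :=
      lt_of_lt_of_le hxδ (le_trans (min_le_right _ _) (Finset.inf'_le _ (Finset.mem_univ i)))
    have hEx : 0 < E i x := hδfprop i x (by rw [abs_of_pos hx0]; exact hxδi)
    -- derivatives
    have hd1 : ∀ y : ℝ, 0 < y →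
        deriv (fun z => V z i) y = (1 + α * c i) * (-α * y ^ (-α - 1)) := by
      intro y hy
      rw [hV]
      exact ((Real.hasDerivAt_rpow_const (x := y) (p := -α)
        (Or.inl hy.ne')).const_mul (1 + α * c i)).deriv
    have hd2 : deriv (deriv (fun z => V z i)) x
        = (1 + α * c i) * (-α * ((-α - 1) * x ^ (-α - 1 - 1))) := by
      have hev : deriv (fun z => V z i) =ᶠ[nhds x]
          fun y => (1 + α * c i) * (-α * y ^ (-α - 1)) := by
        filter_upwards [isOpen_Ioi.eventually_mem hx0] with y hy using hd1 y hy
      rw [hev.deriv_eq]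
      exact (((Real.hasDerivAt_rpow_const (x := x) (p := -α - 1)
        (Or.inl hx0.ne')).const_mul (-α)).const_mul (1 + α * c i)).deriv
    have h1 : x * x ^ (-α - 1) = x ^ (-α) := by
      calc x * x ^ (-α - 1) = x ^ (1 : ℝ) * x ^ (-α - 1) := by rw [Real.rpow_one]
        _ = x ^ (1 + (-α - 1)) := (Real.rpow_add hx0 _ _).symm
        _ = x ^ (-α) := by rw [show (1 : ℝ) + (-α - 1) = -α by ring]
    have h2 : x ^ 2 * x ^ (-α - 1 - 1) = x ^ (-α) := by
      calc x ^ 2 * x ^ (-α - 1 - 1) = x ^ (2 : ℝ) * x ^ (-α - 1 - 1) := by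
            rw [← Real.rpow_natCast x 2]; norm_num
        _ = x ^ (2 + (-α - 1 - 1)) := (Real.rpow_add hx0 _ _).symm
        _ = x ^ (-α) := by rw [show (2 : ℝ) + (-α - 1 - 1) = -α by ring]
    have hsum : ∑ j ∈ Finset.univ.filter (fun j => j ≠ i),
        q i j * ((1 + α * c j) * x ^ (-α) - (1 + α * c i) * x ^ (-α))
        = (-α) * x ^ (-α) * ∑ j ∈ Finset.univ.filter (fun j => j ≠ i),
            q i j * (c i - c j) := by
      rw [Finset.mul_sum]
      exact Finset.sum_congr rfl fun j _ => by ring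
    have heq : switchedGen A B σ q V x i = (-α) * x ^ (-α) * E i x := by
      rw [switchedGen, hd1 x hx0, hd2, hV]
      simp only [hEdef]
      rw [hsum, mul_add]
      linear_combination ((1 - x) * (-B i + (A i + B i) * x) * (1 + α * c i) * (-α)) * h1
        + ((σ i ^ 2 / 2) * (1 - x) ^ 2 * (1 + α * c i) * (-α) * (-α - 1)) * h2
    rw [heq]
    have hpos : 0 < α * x ^ (-α) * E i x :=
      mul_pos (mul_pos hα0 (Real.rpow_pos_of_pos hx0 _)) hEx
    nlinarith [hpos]
end

section
/- Suppose there exist α ∈ (0,1) and real numbers c_1, …, c_n such that for every i ∈ I: 1 + α c_i > 0 and A_i + ((−α + 1)/2)·σ_i² + Σ_{j ≠ i} q_{ij}·(c_i − c_j)/(1 + α c_i) > 0 (Assumption (iii), used for asymptotic stability of the vertex x = 1). Let V(x,i) = (1 + α c_i)·(1 − x)^α. Then there exists δ ∈ (0,1) such that for every i ∈ I and every x ∈ (1 − δ, 1), (L V)(x,i) < 0. -/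
open Finset Real

private theorem aux_hasDerivAt (β x : ℝ) (hx : x < 1) :
    HasDerivAt (fun y : ℝ => (1 - y) ^ β) (-(β * (1 - x) ^ (β - 1))) x := by
  have h1 : HasDerivAt (fun y : ℝ => 1 - y) (-1) x := by
    exact (hasDerivAt_id' x).const_sub 1
  have h2 := (Real.hasDerivAt_rpow_const (x := 1 - x) (p := β)
      (Or.inl (by linarith : (1:ℝ) - x ≠ 0))).comp x h1
  refine h2.congr_deriv ?_
  ring

theorem stmt_6 {n : ℕ} (hn : 0 < n) (A B σ : Fin n → ℝ) (q : Fin n → Fin n → ℝ)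
    (hq : ∀ i j : Fin n, i ≠ j → 0 ≤ q i j)
    (α : ℝ) (hα : α ∈ Set.Ioo (0 : ℝ) 1) (c : Fin n → ℝ)
    (hc : ∀ i, 1 + α * c i > 0)
    (hass : ∀ i : Fin n,
      A i + ((-α + 1) / 2) * σ i ^ 2
        + ∑ j ∈ Finset.univ.filter (fun j => j ≠ i),
            q i j * (c i - c j) / (1 + α * c i) > 0)
    (V : ℝ → Fin n → ℝ) (hV : V = fun x i => (1 + α * c i) * (1 - x) ^ α) :
    ∃ δ ∈ Set.Ioo (0 : ℝ) 1, ∀ i : Fin n, ∀ x ∈ Set.Ioo (1 - δ) 1,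
      switchedGen A B σ q V x i < 0 := by
  obtain ⟨hα0, hα1⟩ := hα
  subst hV
  set g : Fin n → ℝ → ℝ := fun i x =>
    α * ( -((1 + α * c i) * (x * (-B i + (A i + B i) * x)))
      + (σ i ^ 2 / 2) * (1 + α * c i) * (α - 1) * x ^ 2
      + ∑ j ∈ Finset.univ.filter (fun j => j ≠ i), q i j * (c j - c i) ) with hg
  -- first derivative
  have hd1 : ∀ (i : Fin n) (x : ℝ), x < 1 →
      HasDerivAt (fun y => (1 + α * c i) * (1 - y) ^ α)
        (-((1 + α * c i) * α * (1 - x) ^ (α - 1))) x := by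
    intro i x hx
    have := (aux_hasDerivAt α x hx).const_mul (1 + α * c i)
    refine this.congr_deriv ?_
    ring
  have hderiv1 : ∀ (i : Fin n) (x : ℝ), x < 1 →
      deriv (fun y => (1 + α * c i) * (1 - y) ^ α) x
        = -((1 + α * c i) * α * (1 - x) ^ (α - 1)) := fun i x hx => (hd1 i x hx).deriv
  -- second derivative
  have hderiv2 : ∀ (i : Fin n) (x : ℝ), x < 1 →
      deriv (deriv (fun y => (1 + α * c i) * (1 - y) ^ α)) x
        = (1 + α * c i) * α * (α - 1) * (1 - x) ^ (α - 2) := by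
    intro i x hx
    have heq : deriv (fun y => (1 + α * c i) * (1 - y) ^ α)
        =ᶠ[nhds x] fun y => -((1 + α * c i) * α * (1 - y) ^ (α - 1)) :=
      Filter.eventually_of_mem (Iio_mem_nhds hx) fun y hy => hderiv1 i y hy
    rw [heq.deriv_eq]
    have h2 : HasDerivAt (fun y : ℝ => -((1 + α * c i) * α * (1 - y) ^ (α - 1)))
        ((1 + α * c i) * α * (α - 1) * (1 - x) ^ (α - 2)) x := by
      have h0 := ((aux_hasDerivAt (α - 1) x hx).const_mul ((1 + α * c i) * α)).neg
      rw [show α - 1 - 1 = α - 2 by ring] at h0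
      refine h0.congr_deriv ?_
      ring
    exact h2.deriv
  -- key factorization
  have key : ∀ (i : Fin n) (x : ℝ), x < 1 →
      switchedGen A B σ q (fun x i => (1 + α * c i) * (1 - x) ^ α) x i
        = (1 - x) ^ α * g i x := by
    intro i x hx
    have h1x : (0:ℝ) < 1 - x := by linarith
    have hne : (1:ℝ) - x ≠ 0 := ne_of_gt h1x
    have e1 : (1 - x) ^ (α - 1) = (1 - x) ^ α / (1 - x) := by
      rw [Real.rpow_sub h1x, Real.rpow_one]
    have e2 : (1 - x) ^ (α - 2) = (1 - x) ^ α / (1 - x) ^ 2 := by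
      rw [Real.rpow_sub h1x, show ((2:ℝ)) = ((2:ℕ):ℝ) by norm_num, Real.rpow_natCast]
    simp only [switchedGen]
    rw [hderiv1 i x hx, hderiv2 i x hx]
    have esum : ∑ j ∈ Finset.univ.filter (fun j => j ≠ i),
        q i j * ((1 + α * c j) * (1 - x) ^ α - (1 + α * c i) * (1 - x) ^ α)
        = (∑ j ∈ Finset.univ.filter (fun j => j ≠ i), q i j * (c j - c i))
            * (α * (1 - x) ^ α) := by
      rw [Finset.sum_mul]
      exact Finset.sum_congr rfl fun j _ => by ring
    rw [esum, e1, e2, hg]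
    field_simp
  -- g i 1 < 0
  have hg1 : ∀ i, g i 1 < 0 := by
    intro i
    have hci := hc i
    have h := hass i
    set S := ∑ j ∈ Finset.univ.filter (fun j => j ≠ i), q i j * (c j - c i) with hS
    have hsum : ∑ j ∈ Finset.univ.filter (fun j => j ≠ i),
        q i j * (c i - c j) / (1 + α * c i) = -S / (1 + α * c i) := by
      rw [hS, ← Finset.sum_neg_distrib, Finset.sum_div]
      exact Finset.sum_congr rfl fun j _ => by ring
    rw [hsum] at h
    have hlt : S < (1 + α * c i) * (A i + ((-α + 1) / 2) * σ i ^ 2) := by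
      have h' : S / (1 + α * c i) < A i + ((-α + 1) / 2) * σ i ^ 2 := by
        have : -S / (1 + α * c i) > -(A i + ((-α + 1) / 2) * σ i ^ 2) := by linarith
        rw [neg_div] at this
        linarith [neg_lt_neg_iff.mp (by linarith : -(A i + ((-α + 1) / 2) * σ i ^ 2) < -(S / (1 + α * c i)))]
      calc S = S / (1 + α * c i) * (1 + α * c i) := by field_simp
        _ < (A i + ((-α + 1) / 2) * σ i ^ 2) * (1 + α * c i) := by
            exact mul_lt_mul_of_pos_right h' hci
        _ = (1 + α * c i) * (A i + ((-α + 1) / 2) * σ i ^ 2) := by ring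
    have hgeq : g i 1 = α * (S - (1 + α * c i) * (A i + ((-α + 1) / 2) * σ i ^ 2)) := by
      rw [hg]; ring
    rw [hgeq]
    exact mul_neg_of_pos_of_neg hα0 (by linarith)
  -- continuity and extraction of δ
  have hcont : ∀ i, ContinuousAt (g i) 1 := by
    intro i
    rw [hg]
    fun_prop
  have hev : ∀ᶠ x in nhds (1:ℝ), ∀ i, g i x < 0 := by
    rw [Filter.eventually_all]
    exact fun i => (hcont i).eventually_lt_const (hg1 i)
  rw [Metric.eventually_nhds_iff] at hev
  obtain ⟨ε, hε, hball⟩ := hev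
  refine ⟨min ε (1/2), ⟨lt_min hε (by norm_num),
    lt_of_le_of_lt (min_le_right _ _) (by norm_num)⟩, ?_⟩
  intro i x hxmem
  obtain ⟨hx1, hx2⟩ := hxmem
  have hdist : dist x 1 < ε := by
    rw [Real.dist_eq, abs_of_neg (by linarith : x - 1 < 0)]
    have := min_le_left ε (1/2)
    linarith
  rw [key i x hx2]
  exact mul_neg_of_pos_of_neg (Real.rpow_pos_of_pos (by linarith) α) (hball hdist i)
end

section
/- Suppose there exist α ∈ (0,1) and real numbers c_1, …, c_n such that for every i ∈ I: 1 − α c_i > 0 and A_i + ((α + 1)/2)·σ_i² + Σ_{j ≠ i} q_{ij}·(c_i − c_j)/(1 − α c_i) < 0 (Assumption (iv), used for instability of the vertex x = 1). Let V(x,i) = (1 − α c_i)·(1 − x)^{−α}. Then there exists δ ∈ (0,1) such that for every i ∈ I and every x ∈ (1 − δ, 1), (L V)(x,i) < 0. -/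
open Finset Real

lemma hderp (p x : ℝ) (hx : x < 1) :
    HasDerivAt (fun y : ℝ => (1 - y) ^ p) (-p * (1 - x) ^ (p - 1)) x := by
  have h1 : HasDerivAt (fun y : ℝ => 1 - y) (-1) x := by
    simpa using (hasDerivAt_id x).const_sub 1
  have h2 := h1.rpow_const (p := p) (Or.inl (by linarith : (1:ℝ) - x ≠ 0))
  convert h2 using 1; ring

lemma deriv1 (α c0 x : ℝ) (hx : x < 1) :
    deriv (fun y : ℝ => c0 * (1 - y) ^ (-α)) x = c0 * (α * (1 - x) ^ (-α - 1)) := by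
  have := ((hderp (-α) x hx).const_mul c0).deriv
  rw [this]; ring

lemma deriv2 (α c0 x : ℝ) (hx : x < 1) :
    deriv (deriv (fun y : ℝ => c0 * (1 - y) ^ (-α))) x
      = c0 * (α * ((α + 1) * (1 - x) ^ (-α - 2))) := by
  have hev : deriv (fun y : ℝ => c0 * (1 - y) ^ (-α))
      =ᶠ[nhds x] fun y => (c0 * α) * (1 - y) ^ (-α - 1) := by
    filter_upwards [Iio_mem_nhds hx] with y hy
    rw [deriv1 α c0 y hy]; ring
  rw [hev.deriv_eq]
  have := ((hderp (-α - 1) x hx).const_mul (c0 * α)).deriv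
  rw [this]
  have : (-α - 1 - 1 : ℝ) = -α - 2 := by ring
  rw [this]; ring

theorem stmt_7 {n : ℕ} (hn : 0 < n) (A B σ : Fin n → ℝ) (q : Fin n → Fin n → ℝ)
    (hq : ∀ i j : Fin n, i ≠ j → 0 ≤ q i j)
    (α : ℝ) (hα : α ∈ Set.Ioo (0 : ℝ) 1) (c : Fin n → ℝ)
    (hc : ∀ i, 1 - α * c i > 0)
    (hass : ∀ i : Fin n,
      A i + ((α + 1) / 2) * σ i ^ 2
        + ∑ j ∈ Finset.univ.filter (fun j => j ≠ i),
            q i j * (c i - c j) / (1 - α * c i) < 0)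
    (V : ℝ → Fin n → ℝ) (hV : V = fun x i => (1 - α * c i) * (1 - x) ^ (-α)) :
    ∃ δ ∈ Set.Ioo (0 : ℝ) 1, ∀ i : Fin n, ∀ x ∈ Set.Ioo (1 - δ) 1,
      switchedGen A B σ q V x i < 0 := by
  obtain ⟨hα0, hα1⟩ := hα
  set g : Fin n → ℝ → ℝ := fun i x =>
    x * (-B i + (A i + B i) * x) + σ i ^ 2 / 2 * (α + 1) * x ^ 2
      + ∑ j ∈ Finset.univ.filter (fun j => j ≠ i), q i j * (c i - c j) / (1 - α * c i)
    with hg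
  -- key identity
  have key : ∀ i : Fin n, ∀ x : ℝ, x < 1 →
      switchedGen A B σ q V x i
        = α * (1 - α * c i) * (1 - x) ^ (-α) * g i x := by
    intro i x hx
    have hpos : (0:ℝ) < 1 - x := by linarith
    have hne : (1:ℝ) - x ≠ 0 := ne_of_gt hpos
    have hci : (1 : ℝ) - α * c i ≠ 0 := ne_of_gt (hc i)
    have e1 : (1 - x) ^ (-α) = (1 - x) ^ (-α - 2) * (1 - x) ^ 2 := by
      rw [← Real.rpow_two, ← Real.rpow_add hpos]; norm_num
    have e2 : (1 - x) ^ (-α - 1) = (1 - x) ^ (-α - 2) * (1 - x) := by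
      rw [← Real.rpow_add_one hne]; congr 1; ring
    have hsum : ∑ j ∈ Finset.univ.filter (fun j => j ≠ i),
        q i j * ((1 - α * c j) * (1 - x) ^ (-α) - (1 - α * c i) * (1 - x) ^ (-α))
        = (α * (1 - α * c i) * (1 - x) ^ (-α))
          * ∑ j ∈ Finset.univ.filter (fun j => j ≠ i),
              q i j * (c i - c j) / (1 - α * c i) := by
      rw [Finset.mul_sum]
      refine Finset.sum_congr rfl fun j _ => ?_
      field_simp
      ring
    simp only [switchedGen, hV]
    rw [deriv1 α (1 - α * c i) x hx, deriv2 α (1 - α * c i) x hx, hsum, hg]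
    rw [mul_add, mul_add]
    rw [e1, e2]
    ring
  -- eventual negativity of g near 1
  have hev : ∀ᶠ x in nhds (1:ℝ), ∀ i, g i x < 0 := by
    rw [Filter.eventually_all]
    intro i
    have hcont : ContinuousAt (g i) 1 := by
      apply Continuous.continuousAt
      rw [hg]
      fun_prop
    have hg1 : g i 1 < 0 := by
      have := hass i
      rw [hg]; simp only []
      nlinarith [this]
    have := hcont.tendsto (Iio_mem_nhds hg1)
    filter_upwards [this] with y hy using hy
  obtain ⟨ε, hε0, hball⟩ := Metric.eventually_nhds_iff_ball.mp hev
  refine ⟨min (ε/2) (1/2), ⟨lt_min (by linarith) (by norm_num), by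
    have : min (ε/2) (1/2) ≤ 1/2 := min_le_right _ _
    linarith⟩, ?_⟩
  intro i x hx
  obtain ⟨hx1, hx2⟩ := hx
  have hxball : x ∈ Metric.ball (1:ℝ) ε := by
    rw [Metric.mem_ball, Real.dist_eq, abs_sub_lt_iff]
    have h1 : min (ε/2) (1/2) ≤ ε/2 := min_le_left _ _
    constructor <;> linarith
  have hgx : g i x < 0 := hball x hxball i
  rw [key i x hx2]
  have hR : (0:ℝ) < (1 - x) ^ (-α) := Real.rpow_pos_of_pos (by linarith) _
  have : (0:ℝ) < α * (1 - α * c i) * (1 - x) ^ (-α) := mul_pos (mul_pos hα0 (hc i)) hR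
  exact mul_neg_of_pos_of_neg this hgx
end

section
/- Let 0 < x₀ < x₁ < 1 and suppose σ_i ≠ 0 for every i ∈ I. Then there exist γ > 0 and K > 0 such that for every i ∈ I and every x ∈ [x₀, x₁], the function V(x,i) = e^γ − e^{γx} (which does not depend on i) satisfies (L V)(x,i) = −γ e^{γx} x(1 − x)·[ −B_i + (A_i + B_i)x + γ·(σ_i²/2)·x(1 − x) ] ≤ −K. (This is the key estimate in the proof that the switched stochastic replicator dynamic exits any strict subinterval of (0,1) in finite expected time.) -/
open Finset Real

lemma deriv_aux1 (γ x : ℝ) :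
    deriv (fun y => Real.exp γ - Real.exp (γ * y)) x = -(γ * Real.exp (γ * x)) := by
  have h : HasDerivAt (fun y => Real.exp γ - Real.exp (γ * y)) (-(γ * Real.exp (γ * x))) x := by
    have h1 : HasDerivAt (fun y : ℝ => γ * y) γ x := by
      simpa using (hasDerivAt_id x).const_mul γ
    have h2 : HasDerivAt (fun y => Real.exp (γ * y)) (Real.exp (γ * x) * γ) x :=
      (Real.hasDerivAt_exp (γ * x)).comp x h1
    simpa [mul_comm] using (hasDerivAt_const x (Real.exp γ)).fun_sub h2
  exact h.deriv

lemma deriv_aux2 (γ x : ℝ) :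
    deriv (deriv (fun y => Real.exp γ - Real.exp (γ * y))) x
      = -(γ * (γ * Real.exp (γ * x))) := by
  have hfun : deriv (fun y => Real.exp γ - Real.exp (γ * y))
      = fun y => -(γ * Real.exp (γ * y)) := funext fun y => deriv_aux1 γ y
  rw [hfun]
  have h : HasDerivAt (fun y => -(γ * Real.exp (γ * y))) (-(γ * (γ * Real.exp (γ * x)))) x := by
    have h1 : HasDerivAt (fun y : ℝ => γ * y) γ x := by
      simpa using (hasDerivAt_id x).const_mul γ
    have h2 : HasDerivAt (fun y => Real.exp (γ * y)) (Real.exp (γ * x) * γ) x :=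
      (Real.hasDerivAt_exp (γ * x)).comp x h1
    have : HasDerivAt (fun y => -(γ * Real.exp (γ * y))) (-(γ * (Real.exp (γ * x) * γ))) x :=
      (h2.const_mul γ).fun_neg
    convert this using 1
    ring
  exact h.deriv

theorem stmt_8 {n : ℕ} (hn : 0 < n) (A B σ : Fin n → ℝ) (q : Fin n → Fin n → ℝ)
    (hq : ∀ i j : Fin n, i ≠ j → 0 ≤ q i j)
    (x₀ x₁ : ℝ) (hx₀ : 0 < x₀) (hx : x₀ < x₁) (hx₁ : x₁ < 1)
    (hσ : ∀ i : Fin n, σ i ≠ 0) :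
    ∃ γ > (0 : ℝ), ∃ K > (0 : ℝ), ∀ i : Fin n, ∀ x ∈ Set.Icc x₀ x₁,
      switchedGen A B σ q (fun y _ => Real.exp γ - Real.exp (γ * y)) x i =
        -γ * Real.exp (γ * x) * (x * (1 - x)) *
          (-B i + (A i + B i) * x + γ * (σ i ^ 2 / 2) * x * (1 - x)) ∧
      switchedGen A B σ q (fun y _ => Real.exp γ - Real.exp (γ * y)) x i ≤ -K := by
  haveI : NeZero n := ⟨hn.ne'⟩
  have hne : (Finset.univ : Finset (Fin n)).Nonempty := Finset.univ_nonempty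
  obtain ⟨M, hM⟩ : ∃ M : ℝ, M = Finset.univ.sup' hne (fun i => |B i| + |A i + B i|) := ⟨_, rfl⟩
  obtain ⟨s, hs⟩ : ∃ s : ℝ, s = Finset.univ.inf' hne (fun i => σ i ^ 2 / 2) := ⟨_, rfl⟩
  have hMle : ∀ i, |B i| + |A i + B i| ≤ M := by
    intro i; rw [hM]; exact Finset.le_sup' (fun i => |B i| + |A i + B i|) (Finset.mem_univ i)
  have hM0 : 0 ≤ M := by
    obtain ⟨i⟩ := (inferInstance : Nonempty (Fin n))
    exact le_trans (add_nonneg (abs_nonneg _) (abs_nonneg _)) (hMle i)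
  have hsle : ∀ i, s ≤ σ i ^ 2 / 2 := by
    intro i; rw [hs]; exact Finset.inf'_le _ (Finset.mem_univ i)
  have hs0 : 0 < s := by
    rw [hs, Finset.lt_inf'_iff]
    intro i _
    have := hσ i
    positivity
  obtain ⟨c, hc⟩ : ∃ c : ℝ, c = min (x₀ * (1 - x₀)) (x₁ * (1 - x₁)) := ⟨_, rfl⟩
  have hc0 : 0 < c := by
    rw [hc]; apply lt_min <;> nlinarith
  have hcle : ∀ x ∈ Set.Icc x₀ x₁, c ≤ x * (1 - x) := by
    rintro x ⟨h1, h2⟩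
    rw [hc]
    rcases le_or_gt x (1 - x₀) with h | h
    · exact le_trans (min_le_left _ _) (by nlinarith)
    · exact le_trans (min_le_right _ _) (by nlinarith)
  obtain ⟨γ, hγ⟩ : ∃ γ : ℝ, γ = (M + 1) / (s * c) := ⟨_, rfl⟩
  have hγ0 : 0 < γ := by rw [hγ]; positivity
  refine ⟨γ, hγ0, γ * Real.exp (γ * x₀) * c, by positivity, ?_⟩
  intro i x hxm
  obtain ⟨hxl, hxr⟩ := hxm
  have hx0 : 0 < x := lt_of_lt_of_le hx₀ hxl
  have hx1 : x < 1 := lt_of_le_of_lt hxr hx₁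
  have hBr : 1 ≤ -B i + (A i + B i) * x + γ * (σ i ^ 2 / 2) * x * (1 - x) := by
    have h1 : -B i + (A i + B i) * x ≥ -M := by
      have := hMle i
      have hb : -B i ≥ -|B i| := neg_le_neg (le_abs_self _)
      have ha : (A i + B i) * x ≥ -|A i + B i| := by
        have h1 : |(A i + B i) * x| ≤ |A i + B i| := by
          rw [abs_mul]
          have : |x| ≤ 1 := abs_le.mpr ⟨by linarith, by linarith⟩
          nlinarith [abs_nonneg (A i + B i)]
        linarith [neg_abs_le ((A i + B i) * x)]
      linarith
    have h2 : γ * s * c ≤ γ * (σ i ^ 2 / 2) * (x * (1 - x)) := by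
      have hcx := hcle x ⟨hxl, hxr⟩
      have hsi := hsle i
      have hgs : γ * s ≤ γ * (σ i ^ 2 / 2) :=
        mul_le_mul_of_nonneg_left hsi hγ0.le
      exact mul_le_mul hgs hcx hc0.le (by nlinarith)
    have h3 : γ * s * c = M + 1 := by
      rw [hγ]; field_simp
    nlinarith
  have heq : switchedGen A B σ q (fun y _ => Real.exp γ - Real.exp (γ * y)) x i =
      -γ * Real.exp (γ * x) * (x * (1 - x)) *
        (-B i + (A i + B i) * x + γ * (σ i ^ 2 / 2) * x * (1 - x)) := by
    unfold switchedGen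
    rw [deriv_aux1, deriv_aux2]
    simp only [sub_self, mul_zero, Finset.sum_const_zero]
    ring
  refine ⟨heq, ?_⟩
  rw [heq]
  have hexp : Real.exp (γ * x₀) ≤ Real.exp (γ * x) := by
    apply Real.exp_le_exp.mpr
    nlinarith
  have hcx : c ≤ x * (1 - x) := hcle x ⟨hxl, hxr⟩
  have key : γ * Real.exp (γ * x₀) * c * 1 ≤ γ * Real.exp (γ * x) * (x * (1 - x)) *
      (-B i + (A i + B i) * x + γ * (σ i ^ 2 / 2) * x * (1 - x)) := by
    have L1 : γ * Real.exp (γ * x₀) ≤ γ * Real.exp (γ * x) :=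
      mul_le_mul le_rfl hexp (Real.exp_pos _).le hγ0.le
    have L2 : γ * Real.exp (γ * x₀) * c ≤ γ * Real.exp (γ * x) * (x * (1 - x)) :=
      mul_le_mul L1 hcx hc0.le (mul_pos hγ0 (Real.exp_pos _)).le
    exact mul_le_mul L2 hBr zero_le_one
      (mul_nonneg (mul_nonneg hγ0.le (Real.exp_pos _).le) (le_trans hc0.le hcx))
  rw [mul_one] at key
  linarith [key]
end

section
/- If a > c and d < b, then s(t) → 1 as t → ∞ (strategy 1 is dominant: the vertex s = 1 is globally attracting from the interior). -/
theorem stmt_10 (a b c d : ℝ) (hac : a > c) (hdb : d < b)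
    (s : ℝ → ℝ) (hs : Differentiable ℝ s)
    (hode : ∀ t ≥ (0 : ℝ), deriv s t =
      s t * (1 - s t) * ((a - c) * s t + (b - d) * (1 - s t)))
    (h0 : s 0 ∈ Set.Ioo (0 : ℝ) 1) :
    Filter.Tendsto s Filter.atTop (nhds 1) := by
  obtain ⟨hs0, hs1⟩ := h0
  have hA0 : (0:ℝ) < a - c := sub_pos.mpr hac
  have hB0 : (0:ℝ) < b - d := sub_pos.mpr hdb
  set A := a - c with hA
  set B := b - d with hB
  set M := A + B with hM
  have hM0 : 0 < M := by positivity
  -- positivity of the vector field on (0,1)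
  have hFpos : ∀ x ∈ Set.Ioo (0:ℝ) 1, 0 < x * (1 - x) * (A * x + B * (1 - x)) := by
    rintro x ⟨hx0, hx1⟩
    have h1 : (0:ℝ) < 1 - x := by linarith
    have hg : 0 < A * x + B * (1 - x) := by nlinarith
    exact mul_pos (mul_pos hx0 h1) hg
  -- upper bound F(x) ≤ M (1 - x) on [0,1]
  have hFle : ∀ x ∈ Set.Icc (0:ℝ) 1,
      x * (1 - x) * (A * x + B * (1 - x)) ≤ M * (1 - x) := by
    rintro x ⟨hx0, hx1⟩
    have h1 : x * (A * x + B * (1 - x)) ≤ M := by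
      nlinarith [mul_nonneg (mul_nonneg hA0.le (sub_nonneg.mpr hx1)) (by linarith : (0:ℝ) ≤ 1 + x),
        mul_nonneg hB0.le (sq_nonneg x), mul_nonneg hB0.le (sub_nonneg.mpr hx1)]
    calc x * (1 - x) * (A * x + B * (1 - x)) = (1 - x) * (x * (A * x + B * (1 - x))) := by ring
      _ ≤ (1 - x) * M := mul_le_mul_of_nonneg_left h1 (by linarith)
      _ = M * (1 - x) := by ring
  -- Step 1: invariance of (0,1)
  have key : ∀ t ≥ (0:ℝ), s t ∈ Set.Ioo (0:ℝ) 1 := by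
    by_contra hcon
    push_neg at hcon
    obtain ⟨T0, hT0, hT0out⟩ := hcon
    set Bad := {t : ℝ | 0 ≤ t ∧ s t ∉ Set.Ioo (0:ℝ) 1} with hBad
    have hne : Bad.Nonempty := ⟨T0, hT0, hT0out⟩
    have hbdd : BddBelow Bad := ⟨0, fun t ht => ht.1⟩
    set T := sInf Bad with hTdef
    have hclosed : IsClosed Bad := by
      have : Bad = Set.Ici 0 ∩ s ⁻¹' (Set.Ioo (0:ℝ) 1)ᶜ := by
        ext t
        simp only [hBad, Set.mem_setOf_eq, Set.mem_inter_iff, Set.mem_Ici,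
          Set.mem_preimage, Set.mem_compl_iff]
      rw [this]
      exact isClosed_Ici.inter (isOpen_Ioo.isClosed_compl.preimage hs.continuous)
    have hTmem : T ∈ Bad := hclosed.csInf_mem hne hbdd
    have hT0' : (0:ℝ) ≤ T := hTmem.1
    have hTpos : 0 < T := by
      rcases hT0'.lt_or_eq with h | h
      · exact h
      · exfalso; apply hTmem.2; rw [← h]; exact ⟨hs0, hs1⟩
    have hbefore : ∀ t, 0 ≤ t → t < T → s t ∈ Set.Ioo (0:ℝ) 1 := by
      intro t ht htT
      by_contra hx
      exact absurd (csInf_le hbdd ⟨ht, hx⟩) (not_le.mpr htT)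
    -- s T ∈ [0,1]
    have hsT01 : s T ∈ Set.Icc (0:ℝ) 1 := by
      have hc : ContinuousWithinAt s (Set.Ico 0 T) T :=
        hs.continuous.continuousWithinAt
      have hTc : T ∈ closure (Set.Ico (0:ℝ) T) := by
        rw [closure_Ico (ne_of_lt hTpos)]
        exact Set.right_mem_Icc.mpr hT0'
      have hmem := hc.mem_closure_image hTc
      have hsub : s '' Set.Ico 0 T ⊆ Set.Ioo (0:ℝ) 1 := by
        rintro y ⟨t, ⟨ht0, htT⟩, rfl⟩
        exact hbefore t ht0 htT
      have h2 : closure (s '' Set.Ico 0 T) ⊆ Set.Icc (0:ℝ) 1 := by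
        calc closure (s '' Set.Ico 0 T) ⊆ closure (Set.Ioo (0:ℝ) 1) :=
              closure_mono hsub
          _ = Set.Icc (0:ℝ) 1 := closure_Ioo (by norm_num : (0:ℝ) ≠ 1)
      exact h2 hmem
    -- membership in [0,1] on all of [0,T]
    have hIcc01 : ∀ t ∈ Set.Icc (0:ℝ) T, s t ∈ Set.Icc (0:ℝ) 1 := by
      rintro t ⟨ht0, htT⟩
      rcases lt_or_eq_of_le htT with h | h
      · have := hbefore t ht0 h
        exact ⟨this.1.le, this.2.le⟩
      · rw [h]; exact hsT01
    -- s is strictly increasing on [0,T]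
    have hmonoT : StrictMonoOn s (Set.Icc 0 T) := by
      apply strictMonoOn_of_deriv_pos (convex_Icc 0 T) hs.continuous.continuousOn
      intro t ht
      rw [interior_Icc] at ht
      rw [hode t ht.1.le]
      exact hFpos _ (hbefore t ht.1.le ht.2)
    have hsTgt : s 0 < s T :=
      hmonoT (Set.left_mem_Icc.mpr hT0') (Set.right_mem_Icc.mpr hT0') hTpos
    have hsT1 : s T = 1 := by
      by_contra h
      exact hTmem.2 ⟨by linarith, lt_of_le_of_ne hsT01.2 h⟩
    -- Gronwall barrier: h t = exp(M t) * (1 - s t) is nondecreasing on [0,T]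
    set h : ℝ → ℝ := fun t => Real.exp (M * t) * (1 - s t) with hh
    have hderiv : ∀ t, HasDerivAt h
        (Real.exp (M * t) * M * (1 - s t) + Real.exp (M * t) * (-(deriv s t))) t := by
      intro t
      have hlin : HasDerivAt (fun t : ℝ => M * t) M t := by
        simpa using (hasDerivAt_id t).const_mul M
      have h1 : HasDerivAt (fun t => Real.exp (M * t)) (Real.exp (M * t) * M) t := hlin.exp
      have h2 : HasDerivAt (fun t => 1 - s t) (-(deriv s t)) t := by
        simpa using ((hs t).hasDerivAt).const_sub 1
      exact h1.mul h2
    have hhd : Differentiable ℝ h := fun t => (hderiv t).differentiableAt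
    have hhmono : MonotoneOn h (Set.Icc 0 T) := by
      apply monotoneOn_of_deriv_nonneg (convex_Icc 0 T) hhd.continuous.continuousOn
        (fun t _ => (hhd t).differentiableWithinAt)
      intro t ht
      rw [interior_Icc] at ht
      rw [(hderiv t).deriv]
      have hst : s t ∈ Set.Icc (0:ℝ) 1 := hIcc01 t ⟨ht.1.le, ht.2.le⟩
      have hF := hFle (s t) hst
      rw [hode t ht.1.le]
      have hexp : 0 < Real.exp (M * t) := Real.exp_pos _
      nlinarith [hexp]
    have h0T := hhmono (Set.left_mem_Icc.mpr hT0') (Set.right_mem_Icc.mpr hT0') hT0'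
    have hh0 : h 0 = 1 - s 0 := by simp [hh]
    have hhT : h T = 0 := by simp [hh, hsT1]
    rw [hh0, hhT] at h0T
    linarith
  -- Step 2: s is increasing on [0,∞)
  have hpos : ∀ t ≥ (0:ℝ), 0 < deriv s t := by
    intro t ht
    rw [hode t ht]
    exact hFpos _ (key t ht)
  have hmono : StrictMonoOn s (Set.Ici 0) := by
    apply strictMonoOn_of_deriv_pos (convex_Ici 0) hs.continuous.continuousOn
    intro t ht
    rw [interior_Ici] at ht
    exact hpos t ht.le
  -- auxiliary monotone bounded function
  set g : ℝ → ℝ := fun t => s (max t 0) with hg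
  have hgmono : Monotone g := by
    intro t u htu
    exact hmono.monotoneOn (Set.mem_Ici.mpr (le_max_right t 0))
      (Set.mem_Ici.mpr (le_max_right u 0)) (max_le_max htu le_rfl)
  have hgmem : ∀ t, g t ∈ Set.Ioo (0:ℝ) 1 := fun t => key _ (le_max_right t 0)
  have hgbdd : BddAbove (Set.range g) := ⟨1, by rintro y ⟨t, rfl⟩; exact (hgmem t).2.le⟩
  set L := ⨆ t, g t with hL
  have hgL : Filter.Tendsto g Filter.atTop (nhds L) := tendsto_atTop_ciSup hgmono hgbdd
  have hsg : s =ᶠ[Filter.atTop] g := by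
    filter_upwards [Filter.eventually_ge_atTop (0:ℝ)] with t ht
    simp [hg, max_eq_left ht]
  have hsL : Filter.Tendsto s Filter.atTop (nhds L) := hgL.congr' hsg.symm
  have hLle1 : L ≤ 1 := ciSup_le fun t => (hgmem t).2.le
  have hs0L : s 0 ≤ L := by
    have := le_ciSup hgbdd (0:ℝ)
    simpa [hg] using this
  have hgleL : ∀ t, g t ≤ L := fun t => le_ciSup hgbdd t
  -- Step 3: L = 1
  have hL1 : L = 1 := by
    by_contra hne
    have hLlt : L < 1 := lt_of_le_of_ne hLle1 hne
    set m := min A B with hm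
    have hm0 : 0 < m := lt_min hA0 hB0
    set δ := s 0 * (1 - L) * m with hδ
    have hδ0 : 0 < δ := by
      apply mul_pos (mul_pos hs0 (by linarith)) hm0
    -- lower bound on the vector field along the trajectory
    have hFlow : ∀ t ≥ (0:ℝ), δ ≤ deriv s t := by
      intro t ht
      rw [hode t ht]
      have hst1 : s 0 ≤ s t := by
        rcases eq_or_lt_of_le ht with h | h
        · rw [← h]
        · exact (hmono Set.self_mem_Ici (Set.mem_Ici.mpr ht) h).le
      have hstL : s t ≤ L := by
        have := hgleL t
        simpa [hg, max_eq_left ht] using this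
      have hkey := key t ht
      have hg1 : m ≤ A * s t + B * (1 - s t) := by
        have h1 : m ≤ A := min_le_left A B
        have h2 : m ≤ B := min_le_right A B
        nlinarith [hkey.1, hkey.2]
      have h1s : 1 - L ≤ 1 - s t := by linarith
      have : s 0 * (1 - L) * m ≤ s t * (1 - s t) * (A * s t + B * (1 - s t)) := by
        have hst0 : 0 < s t := hkey.1
        have h1st : 0 < 1 - s t := by linarith
        have step1 : s 0 * (1 - L) ≤ s t * (1 - s t) :=
          mul_le_mul hst1 h1s (by linarith) hst0.le
        exact mul_le_mul step1 hg1 hm0.le (mul_nonneg hst0.le h1st.le)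
      linarith
    -- φ t = s t - δ t is monotone on [0,∞)
    set φ : ℝ → ℝ := fun t => s t - δ * t with hφ
    have hφd : ∀ t, HasDerivAt φ (deriv s t - δ) t := by
      intro t
      have hlin : HasDerivAt (fun t : ℝ => δ * t) δ t := by
        simpa using (hasDerivAt_id t).const_mul δ
      exact ((hs t).hasDerivAt).sub hlin
    have hφmono : MonotoneOn φ (Set.Ici 0) := by
      have hφcont : ContinuousOn φ (Set.Ici 0) :=
        fun t _ => (hφd t).differentiableAt.continuousAt.continuousWithinAt
      apply monotoneOn_of_deriv_nonneg (convex_Ici 0) hφcont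
        (fun t _ => (hφd t).differentiableAt.differentiableWithinAt)
      intro t ht
      rw [interior_Ici] at ht
      rw [(hφd t).deriv]
      linarith [hFlow t ht.le]
    set t1 := (L - s 0) / δ + 1 with ht1
    have ht10 : 0 ≤ t1 := by
      have h := div_nonneg (by linarith : (0:ℝ) ≤ L - s 0) hδ0.le
      rw [ht1]; linarith
    have hφ01 := hφmono Set.self_mem_Ici (Set.mem_Ici.mpr ht10) ht10
    have hst1L : s t1 ≤ L := by
      have := hgleL t1
      simpa [hg, max_eq_left ht10] using this
    have hδt1 : δ * t1 = (L - s 0) + δ := by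
      rw [ht1]
      field_simp
    have hφ01' : s 0 - δ * 0 ≤ s t1 - δ * t1 := hφ01
    rw [hδt1] at hφ01'
    linarith
  rw [← hL1]
  exact hsL
end

section
/- If a < c and d > b, then s(t) → 0 as t → ∞ (strategy 2 is dominant: the vertex s = 0 is globally attracting from the interior). -/
open Set Filter

theorem stmt_11 (a b c d : ℝ) (hac : a < c) (hdb : d > b)
    (s : ℝ → ℝ) (hs : Differentiable ℝ s)
    (hode : ∀ t ≥ (0 : ℝ), deriv s t =
      s t * (1 - s t) * ((a - c) * s t + (b - d) * (1 - s t)))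
    (h0 : s 0 ∈ Set.Ioo (0 : ℝ) 1) :
    Filter.Tendsto s Filter.atTop (nhds 0) := by
  set p := a - c with hp
  set q := b - d with hq
  have hp0 : p < 0 := by rw [hp]; linarith
  have hq0 : q < 0 := by rw [hq]; linarith
  set f : ℝ → ℝ := fun x => x * (1 - x) * (p * x + q * (1 - x)) with hfdef
  set cl : ℝ → ℝ := fun x => max 0 (min 1 x) with hcl
  have hclmem : ∀ x, cl x ∈ Icc (0:ℝ) 1 :=
    fun x => ⟨le_max_left _ _, max_le (by norm_num) (min_le_left _ _)⟩
  have hclid : ∀ x ∈ Icc (0:ℝ) 1, cl x = x := by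
    intro x hx
    simp only [hcl, min_eq_right hx.2, max_eq_right hx.1]
  have hcllip : ∀ x y, |cl x - cl y| ≤ |x - y| := by
    intro x y
    calc |cl x - cl y| = |max (min 1 x) 0 - max (min 1 y) 0| := by
          simp only [hcl]
          rw [max_comm (0:ℝ) (min 1 x), max_comm (0:ℝ) (min 1 y)]
      _ ≤ |min 1 x - min 1 y| := abs_max_sub_max_le_abs _ _ _
      _ ≤ max |(1:ℝ) - 1| |x - y| := abs_min_sub_min_le_max 1 x 1 y
      _ ≤ |x - y| := by simp
  set Kr := |q| + 2 * |p - 2*q| + 3 * |p - q| with hKrdef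
  have hKr0 : 0 ≤ Kr := by positivity
  have key : ∀ u v : ℝ, u ∈ Icc (0:ℝ) 1 → v ∈ Icc (0:ℝ) 1 → |f u - f v| ≤ Kr * |u - v| := by
    intro u v hu hv
    have hfv : f u - f v
        = (u - v) * (q + (p - 2*q) * (u + v) - (p - q) * (u^2 + u*v + v^2)) := by
      simp only [hfdef]; ring
    have h1 : |(p - 2*q) * (u + v)| ≤ |p - 2*q| * 2 := by
      rw [abs_mul]
      have : |u + v| ≤ 2 := abs_le.2 ⟨by linarith [hu.1, hv.1], by linarith [hu.2, hv.2]⟩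
      exact mul_le_mul_of_nonneg_left this (abs_nonneg _)
    have h2 : |(p - q) * (u^2 + u*v + v^2)| ≤ |p - q| * 3 := by
      rw [abs_mul]
      have : |u^2 + u*v + v^2| ≤ 3 := by
        rw [abs_le]
        constructor <;> nlinarith [hu.1, hu.2, hv.1, hv.2]
      exact mul_le_mul_of_nonneg_left this (abs_nonneg _)
    have hB : |q + (p - 2*q) * (u + v) - (p - q) * (u^2 + u*v + v^2)| ≤ Kr := by
      have h3 := abs_add_three q ((p - 2*q) * (u + v)) (-((p - q) * (u^2 + u*v + v^2)))
      rw [abs_neg] at h3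
      have h4 : q + (p - 2*q) * (u + v) - (p - q) * (u^2 + u*v + v^2)
          = q + (p - 2*q) * (u + v) + -((p - q) * (u^2 + u*v + v^2)) := by ring
      rw [h4, hKrdef]
      linarith
    rw [hfv, abs_mul, mul_comm (|u - v|)]
    exact mul_le_mul_of_nonneg_right hB (abs_nonneg _)
  have hglip : LipschitzWith ⟨Kr, hKr0⟩ (fun x => f (cl x)) := by
    apply LipschitzWith.of_dist_le_mul
    intro x y
    simp only [Real.dist_eq, NNReal.coe_mk]
    calc |f (cl x) - f (cl y)| ≤ Kr * |cl x - cl y| := key _ _ (hclmem x) (hclmem y)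
      _ ≤ Kr * |x - y| := mul_le_mul_of_nonneg_left (hcllip x y) hKr0
  -- invariance: s stays in (0,1)
  have hsIoo : ∀ t ≥ (0:ℝ), s t ∈ Ioo (0:ℝ) 1 := by
    by_contra hcon
    push_neg at hcon
    obtain ⟨t₀, ht₀, hnot⟩ := hcon
    set A : Set ℝ := {t | 0 ≤ t ∧ s t ∉ Ioo (0:ℝ) 1} with hA
    have hAne : A.Nonempty := ⟨t₀, ht₀, hnot⟩
    have hAclosed : IsClosed A := by
      have : A = Ici 0 ∩ s ⁻¹' (Ioo (0:ℝ) 1)ᶜ := by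
        ext t; simp [hA, mem_preimage]
      rw [this]
      exact isClosed_Ici.inter ((isOpen_Ioo.preimage hs.continuous).isClosed_compl)
    have hAbdd : BddBelow A := ⟨0, fun t ht => ht.1⟩
    set t₁ := sInf A with ht₁def
    have ht₁A : t₁ ∈ A := hAclosed.csInf_mem hAne hAbdd
    have ht₁0 : 0 ≤ t₁ := ht₁A.1
    have ht₁pos : 0 < t₁ := by
      rcases eq_or_lt_of_le ht₁0 with h | h
      · exact absurd h0 (h ▸ ht₁A.2)
      · exact h
    have hIco : ∀ t ∈ Ico 0 t₁, s t ∈ Ioo (0:ℝ) 1 := by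
      intro t ht
      by_contra hn
      exact absurd (csInf_le hAbdd ⟨ht.1, hn⟩) (not_le.2 ht.2)
    have hIcc' : ∀ t ∈ Ico 0 t₁, s t ∈ Icc (0:ℝ) 1 :=
      fun t ht => ⟨(hIco t ht).1.le, (hIco t ht).2.le⟩
    have hst₁ : s t₁ ∈ Icc (0:ℝ) 1 := by
      have hmem : t₁ ∈ closure (Ico 0 t₁) := by
        rw [closure_Ico ht₁pos.ne]
        exact ⟨ht₁0, le_refl _⟩
      have hne : (nhdsWithin t₁ (Ico 0 t₁)).NeBot := mem_closure_iff_nhdsWithin_neBot.1 hmem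
      have htend : Tendsto s (nhdsWithin t₁ (Ico 0 t₁)) (nhds (s t₁)) :=
        (hs.continuous.continuousWithinAt)
      exact isClosed_Icc.mem_of_tendsto htend
        (eventually_mem_nhdsWithin.mono (fun x hx => hIcc' x hx))
    have hcases : s t₁ = 0 ∨ s t₁ = 1 := by
      have h2 := ht₁A.2
      rw [mem_Ioo, not_and_or, not_lt, not_lt] at h2
      rcases h2 with h | h
      · exact Or.inl (le_antisymm h hst₁.1)
      · exact Or.inr (le_antisymm hst₁.2 h)
    have hsIcc : ∀ t ∈ Icc 0 t₁, s t ∈ Icc (0:ℝ) 1 := by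
      intro t ht
      rcases eq_or_lt_of_le ht.2 with h | h
      · rw [h]; exact hst₁
      · exact hIcc' t ⟨ht.1, h⟩
    have hEq : EqOn s (fun _ => s t₁) (Icc 0 t₁) := by
      apply ODE_solution_unique_of_mem_Icc_left
        (v := fun _ x => f (cl x)) (s := fun _ => (univ : Set ℝ)) (K := ⟨Kr, hKr0⟩)
      · intro t _
        exact hglip.lipschitzOnWith
      · exact hs.continuous.continuousOn
      · intro t ht
        have hd : HasDerivAt s (deriv s t) t := (hs t).hasDerivAt
        have hmem : s t ∈ Icc (0:ℝ) 1 := hsIcc t ⟨ht.1.le, ht.2⟩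
        have heq : f (cl (s t)) = deriv s t := by
          rw [hclid _ hmem]
          simp only [hfdef]
          exact (hode t ht.1.le).symm
        rw [heq]
        exact hd.hasDerivWithinAt
      · intro t _; exact mem_univ _
      · exact continuousOn_const
      · intro t ht
        have h0' : f (cl (s t₁)) = 0 := by
          rcases hcases with h | h <;> rw [h] <;> simp [hcl, hfdef]
        rw [h0']
        exact (hasDerivWithinAt_const t _ _)
      · intro t _; exact mem_univ _
      · rfl
    have hs0 := hEq ⟨le_refl 0, ht₁0⟩
    rcases hcases with h | h
    · rw [h] at hs0; exact absurd hs0 (ne_of_gt h0.1)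
    · rw [h] at hs0; exact absurd hs0 (ne_of_lt h0.2)
  -- derivative is negative on (0, ∞)
  have hderivneg : ∀ t ∈ interior (Ici (0:ℝ)), deriv s t < 0 := by
    intro t ht
    rw [interior_Ici] at ht
    have hm := hsIoo t ht.le
    have hx := hm.1
    have hy : 0 < 1 - s t := by linarith [hm.2]
    have hin : p * s t + q * (1 - s t) < 0 := by nlinarith
    rw [hode t ht.le]
    exact mul_neg_of_pos_of_neg (mul_pos hx hy) hin
  have hanti : StrictAntiOn s (Ici (0:ℝ)) :=
    strictAntiOn_of_deriv_neg (convex_Ici 0) hs.continuous.continuousOn hderivneg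
  have hantiOn : AntitoneOn s (Ici (0:ℝ)) := hanti.antitoneOn
  rw [Metric.tendsto_atTop]
  intro ε hε
  set m := max p q with hmdef
  have hm0 : m < 0 := max_lt hp0 hq0
  set ε' := min ε (s 0) with hε'def
  have hε'0 : 0 < ε' := lt_min hε h0.1
  have h1s0 : 0 < 1 - s 0 := by linarith [h0.2]
  have key2 : ∃ T ≥ (0:ℝ), s T < ε' := by
    by_contra hcon
    push_neg at hcon
    set δ := ε' * (1 - s 0) * m with hδdef
    have hδ0 : δ < 0 := mul_neg_of_pos_of_neg (mul_pos hε'0 h1s0) hm0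
    have hdb' : ∀ t ∈ interior (Ici (0:ℝ)), deriv s t ≤ δ := by
      intro t ht
      rw [interior_Ici] at ht
      have hm1 := hsIoo t ht.le
      have hle := hcon t ht.le
      have hle0 : s t ≤ s 0 := hantiOn (mem_Ici.2 le_rfl) (mem_Ici.2 ht.le) ht.le
      rw [hode t ht.le]
      have hxnn : 0 ≤ s t * (1 - s t) := mul_nonneg hm1.1.le (by linarith [hm1.2])
      have hA : p * s t + q * (1 - s t) ≤ m := by
        have hpm : p ≤ m := le_max_left p q
        have hqm : q ≤ m := le_max_right p q
        nlinarith [hm1.1.le, (by linarith [hm1.2] : (0:ℝ) ≤ 1 - s t)]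
      have hB : ε' * (1 - s 0) ≤ s t * (1 - s t) := by
        nlinarith [hm1.2, hε'0.le]
      calc s t * (1 - s t) * (p * s t + q * (1 - s t))
          ≤ s t * (1 - s t) * m := mul_le_mul_of_nonneg_left hA hxnn
        _ ≤ ε' * (1 - s 0) * m := mul_le_mul_of_nonpos_right hB hm0.le
        _ = δ := rfl
    have hgrow : ∀ t ≥ (0:ℝ), s t - s 0 ≤ δ * (t - 0) := by
      intro t ht
      exact (convex_Ici 0).image_sub_le_mul_sub_of_deriv_le hs.continuous.continuousOn
        hs.differentiableOn hdb' 0 (mem_Ici.2 le_rfl) t (mem_Ici.2 ht) ht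
    set T := s 0 / (-δ) + 1 with hTdef
    have hT0 : 0 ≤ T := by
      have h6 : 0 < s 0 / (-δ) := div_pos h0.1 (neg_pos.2 hδ0)
      rw [hTdef]
      linarith
    have hg := hgrow T hT0
    have hsT := hcon T hT0
    have hcomp : δ * T = -(s 0) + δ := by
      have h7 : (-δ) ≠ 0 := (neg_pos.2 hδ0).ne'
      rw [hTdef]
      field_simp
      rw [mul_add, mul_neg, mul_div_assoc', mul_comm δ (s 0), mul_div_assoc, div_self hδ0.ne, mul_one, mul_one]
    rw [sub_zero, hcomp] at hg
    linarith
  obtain ⟨T, hT0, hTs⟩ := key2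
  refine ⟨T, fun t ht => ?_⟩
  have hst := hsIoo t (hT0.trans ht)
  have hle : s t ≤ s T := hantiOn (mem_Ici.2 hT0) (mem_Ici.2 (hT0.trans ht)) ht
  rw [Real.dist_eq, sub_zero, abs_of_pos hst.1]
  exact lt_of_le_of_lt hle (lt_of_lt_of_le hTs (min_le_left _ _))
end

section
/- Suppose a > c and d > b (coordination game), and let s* = (d − b)/((a − c) + (d − b)), which lies in (0,1). If s(0) > s*, then s(t) → 1 as t → ∞. -/
open Set Filter

lemma lipAux (p q : ℝ) (hp : 0 < p) (hq : q < 0) :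
    LipschitzOnWith (6*p - 8*q).toNNReal (fun x : ℝ => x*(1-x)*(p*x+q*(1-x))) (Set.Icc 0 1) := by
  rw [lipschitzOnWith_iff_dist_le_mul]
  intro x hx y hy
  rw [Real.dist_eq, Real.dist_eq, Real.coe_toNNReal _ (by linarith)]
  obtain ⟨hx0, hx1⟩ := hx
  obtain ⟨hy0, hy1⟩ := hy
  have key : x*(1-x)*(p*x+q*(1-x)) - y*(1-y)*(p*y+q*(1-y))
      = (x - y) * (q + (p-2*q)*(x+y) - (p-q)*(x^2+x*y+y^2)) := by ring
  rw [key, abs_mul]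
  have h1 : 0 ≤ (p-2*q)*(x+y) := mul_nonneg (by linarith) (by linarith)
  have h2 : x^2+x*y+y^2 ≤ 3 := by nlinarith
  have h3 : 0 ≤ x^2+x*y+y^2 := by nlinarith [mul_nonneg hx0 hy0, sq_nonneg x, sq_nonneg y]
  have h4 : (p-q)*(x^2+x*y+y^2) ≤ (p-q)*3 := mul_le_mul_of_nonneg_left h2 (by linarith)
  have h5 : 0 ≤ (p-q)*(x^2+x*y+y^2) := mul_nonneg (by linarith) h3
  have h6 : (p-2*q)*(x+y) ≤ (p-2*q)*2 := mul_le_mul_of_nonneg_left (by linarith) (by linarith)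
  have hQ : |q + (p-2*q)*(x+y) - (p-q)*(x^2+x*y+y^2)| ≤ 6*p - 8*q := by
    rw [abs_le]
    constructor <;> linarith
  rw [mul_comm (6*p-8*q) _]
  exact mul_le_mul_of_nonneg_left hQ (abs_nonneg _)

theorem stmt_12 (a b c d : ℝ) (hac : a > c) (hdb : d > b)
    (s : ℝ → ℝ) (hs : Differentiable ℝ s)
    (hode : ∀ t ≥ (0 : ℝ), deriv s t =
      s t * (1 - s t) * ((a - c) * s t + (b - d) * (1 - s t)))
    (h0 : s 0 ∈ Set.Ioo (0 : ℝ) 1)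
    (sstar : ℝ) (hsstar : sstar = (d - b) / ((a - c) + (d - b)))
    (hinit : s 0 > sstar) :
    sstar ∈ Set.Ioo (0 : ℝ) 1 ∧ Filter.Tendsto s Filter.atTop (nhds 1) := by
  have hden : (0:ℝ) < (a - c) + (d - b) := by linarith
  have hstar0 : 0 < sstar := by
    rw [hsstar]; exact div_pos (by linarith) hden
  have hstar1 : sstar < 1 := by
    rw [hsstar, div_lt_one hden]; linarith
  set F : ℝ → ℝ := fun x => x * (1 - x) * ((a - c) * x + (b - d) * (1 - x)) with hF
  have hFcont : Continuous F := by fun_prop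
  have hstareq : sstar * ((a - c) + (d - b)) = d - b := by
    rw [hsstar]; field_simp
  have hFsstar : F sstar = 0 := by
    have : (a - c) * sstar + (b - d) * (1 - sstar) = 0 := by linarith [hstareq]
    simp [hF, this]
  have hF1 : F 1 = 0 := by simp [hF]
  have hFpos : ∀ x, sstar < x → x < 1 → 0 < F x := by
    intro x h1 h2
    have hx0 : 0 < x := lt_trans hstar0 h1
    have hlin : 0 < (a - c) * x + (b - d) * (1 - x) := by
      nlinarith [mul_pos (sub_pos.mpr h1) hden]
    exact mul_pos (mul_pos hx0 (by linarith)) hlin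
  -- Lipschitz
  have hlip : ∀ (_ : ℝ), LipschitzOnWith (6*(a-c) - 8*(b-d)).toNNReal F (Set.Icc sstar 1) := by
    intro _
    exact (lipAux (a-c) (b-d) (by linarith) (by linarith)).mono
      (Icc_subset_Icc (le_of_lt hstar0) le_rfl)
  -- Invariance
  have hinv : ∀ t, 0 ≤ t → s t ∈ Set.Ioo sstar 1 := by
    by_contra hcon
    push_neg at hcon
    obtain ⟨T0, hT00, hT0'⟩ := hcon
    set B : Set ℝ := {t | 0 ≤ t ∧ s t ∉ Set.Ioo sstar 1} with hB
    have hBne : B.Nonempty := ⟨T0, hT00, hT0'⟩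
    have hBclosed : IsClosed B := by
      have : B = Set.Ici 0 ∩ s ⁻¹' (Set.Ioo sstar 1)ᶜ := rfl
      rw [this]
      exact isClosed_Ici.inter (isOpen_Ioo.isClosed_compl.preimage hs.continuous)
    have hBbdd : BddBelow B := ⟨0, fun t ht => ht.1⟩
    set T := sInf B with hT
    have hTB : T ∈ B := hBclosed.csInf_mem hBne hBbdd
    have hs0mem : s 0 ∈ Set.Ioo sstar 1 := ⟨hinit, h0.2⟩
    have hT0lt : 0 < T := by
      rcases lt_or_eq_of_le hTB.1 with h | h
      · exact h
      · exact absurd (h ▸ hs0mem) hTB.2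
    have hbefore : ∀ t, 0 ≤ t → t < T → s t ∈ Set.Ioo sstar 1 := by
      intro t ht0 htT
      by_contra hmem
      exact absurd (csInf_le hBbdd (⟨ht0, hmem⟩ : t ∈ B)) (not_le.mpr htT)
    have hT_Icc : s T ∈ Set.Icc sstar 1 := by
      have hne : (nhdsWithin T (Set.Iio T)).NeBot := inferInstance
      refine isClosed_Icc.mem_of_tendsto
        ((hs.continuous.tendsto T).mono_left (nhdsWithin_le_nhds (s := Set.Iio T))) ?_
      have hmemIoo : Set.Ioo 0 T ∈ nhdsWithin T (Set.Iio T) := by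
        have : Set.Ioo 0 T = Set.Ioi 0 ∩ Set.Iio T := Set.Ioi_inter_Iio.symm
        rw [this]
        exact Filter.inter_mem (mem_nhdsWithin_of_mem_nhds (isOpen_Ioi.mem_nhds hT0lt))
          self_mem_nhdsWithin
      filter_upwards [hmemIoo] with t ht
      exact Ioo_subset_Icc_self (hbefore t ht.1.le ht.2)
    have hFT : F (s T) = 0 := by
      rcases hT_Icc.1.lt_or_eq with h1 | h1
      · rcases hT_Icc.2.lt_or_eq with h2 | h2
        · exact absurd (⟨h1, h2⟩ : s T ∈ Set.Ioo sstar 1) hTB.2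
        · rw [h2]; exact hF1
      · rw [← h1]; exact hFsstar
    have heq : Set.EqOn s (fun _ => s T) (Set.Icc 0 T) := by
      apply ODE_solution_unique_of_mem_Icc_left (v := fun _ x => F x)
        (s := fun _ => Set.Icc sstar 1) (fun t _ => hlip t)
        (hs.continuous.continuousOn)
        (fun t ht => by
          have := (hs t).hasDerivAt
          rw [hode t ht.1.le] at this
          exact this.hasDerivWithinAt)
        (fun t ht => by
          rcases ht.2.lt_or_eq with h | h
          · exact Ioo_subset_Icc_self (hbefore t ht.1.le h)
          · rw [h]; exact hT_Icc)
        continuousOn_const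
        (fun t ht => by
          simpa [hFT] using (hasDerivWithinAt_const t (Set.Iic t) (s T)))
        (fun t ht => hT_Icc)
        rfl
    have h0T : s 0 = s T := heq ⟨le_rfl, hT0lt.le⟩
    rcases hT_Icc.1.lt_or_eq with h1 | h1
    · rcases hT_Icc.2.lt_or_eq with h2 | h2
      · exact hTB.2 ⟨h1, h2⟩
      · rw [h0T, h2] at h0; exact lt_irrefl 1 h0.2
    · rw [h0T, ← h1] at hinit; exact lt_irrefl sstar hinit
  -- monotone
  have hderiv_pos : ∀ t, 0 ≤ t → 0 < deriv s t := by
    intro t ht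
    rw [hode t ht]
    exact hFpos (s t) (hinv t ht).1 (hinv t ht).2
  have hmonoOn : StrictMonoOn s (Set.Ici 0) := by
    apply strictMonoOn_of_deriv_pos (convex_Ici 0) hs.continuous.continuousOn
    intro x hx
    rw [interior_Ici] at hx
    exact hderiv_pos x hx.le
  set g : ℝ → ℝ := fun t => s (max t 0) with hg
  have hgmono : Monotone g := by
    intro x y hxy
    exact hmonoOn.monotoneOn (le_max_right x 0) (le_max_right y 0) (max_le_max hxy le_rfl)
  have hbdd : BddAbove (Set.range g) := by
    refine ⟨1, ?_⟩
    rintro _ ⟨t, rfl⟩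
    exact (hinv _ (le_max_right t 0)).2.le
  have hgl : Tendsto g atTop (nhds (⨆ t, g t)) := tendsto_atTop_ciSup hgmono hbdd
  set L := ⨆ t, g t with hL
  have hsl : Tendsto s atTop (nhds L) := by
    apply hgl.congr'
    filter_upwards [eventually_ge_atTop (0:ℝ)] with t ht
    rw [hg]; simp [max_eq_left ht]
  have hLle1 : L ≤ 1 := ciSup_le fun t => (hinv _ (le_max_right t 0)).2.le
  have hg0 : g 0 = s 0 := by simp [hg]
  have hLgt : sstar < L := lt_of_lt_of_le hinit (hg0 ▸ le_ciSup hbdd 0)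
  refine ⟨⟨hstar0, hstar1⟩, ?_⟩
  rcases hLle1.lt_or_eq with hlt | hEq
  · exfalso
    have hFL : 0 < F L := hFpos L hLgt hlt
    set m := F L / 2 with hm
    have hmpos : 0 < m := half_pos hFL
    have h1 : ∀ᶠ x in nhds L, m < F x :=
      (hFcont.continuousAt).eventually_const_lt (half_lt_self hFL)
    have hev : ∀ᶠ t in atTop, m < F (s t) := hsl.eventually h1
    obtain ⟨t0, ht0⟩ := ((hev.and (eventually_ge_atTop (0:ℝ))).and (eventually_ge_atTop (0:ℝ))).exists_forall_of_atTop
    have ht00 : 0 ≤ t0 := (ht0 t0 le_rfl).2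
    have hderivm : ∀ t, t0 ≤ t → m < deriv s t := by
      intro t ht
      rw [hode t (le_trans ht00 ht)]
      exact (ht0 t ht).1.1
    set t1 := t0 + 2/m with ht1def
    have ht01 : t0 < t1 := by
      have h2m : 0 < 2/m := by positivity
      rw [ht1def]
      exact lt_add_of_pos_right t0 h2m
    have hphi : StrictMonoOn (fun t => s t - m * t) (Set.Ici t0) := by
      apply strictMonoOn_of_deriv_pos (convex_Ici t0)
      · exact (hs.continuous.sub (continuous_const.mul continuous_id)).continuousOn
      · intro x hx
        rw [interior_Ici] at hx
        have hda : HasDerivAt (fun t => s t - m * t) (deriv s x - m * 1) x :=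
          (hs x).hasDerivAt.sub ((hasDerivAt_id x).const_mul m)
        rw [hda.deriv]
        have := hderivm x hx.le
        linarith
    have hstep : s t0 - m * t0 < s t1 - m * t1 :=
      hphi Set.self_mem_Ici (Set.mem_Ici.mpr ht01.le) ht01
    have hdiff : m * (t1 - t0) = 2 := by
      rw [show t1 - t0 = 2/m by rw [ht1def]; ring]
      field_simp
    have h1' : s t1 < 1 := (hinv t1 (le_trans ht00 ht01.le)).2
    have h2' : sstar < s t0 := (hinv t0 ht00).1
    nlinarith
  · exact hEq ▸ hsl
end

section
/- Suppose a > c and d > b (coordination game), and let s* = (d − b)/((a − c) + (d − b)), which lies in (0,1). If s(0) < s*, then s(t) → 0 as t → ∞. -/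
theorem stmt_13 (a b c d : ℝ) (hac : a > c) (hdb : d > b)
    (s : ℝ → ℝ) (hs : Differentiable ℝ s)
    (hode : ∀ t ≥ (0 : ℝ), deriv s t =
      s t * (1 - s t) * ((a - c) * s t + (b - d) * (1 - s t)))
    (h0 : s 0 ∈ Set.Ioo (0 : ℝ) 1)
    (sstar : ℝ) (hsstar : sstar = (d - b) / ((a - c) + (d - b)))
    (hinit : s 0 < sstar) :
    sstar ∈ Set.Ioo (0 : ℝ) 1 ∧ Filter.Tendsto s Filter.atTop (nhds 0) := by
  set K : ℝ := (a - c) + (d - b) with hK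
  have hKpos : 0 < K := by simp only [hK]; linarith
  have hsstar0 : 0 < sstar := by
    rw [hsstar]; exact div_pos (by linarith) hKpos
  have hsstar1 : sstar < 1 := by
    rw [hsstar, div_lt_one hKpos]; linarith
  have hKs : K * sstar = d - b := by
    rw [hsstar]; field_simp
  obtain ⟨h0l, h0r⟩ := h0
  have hcont : Continuous s := hs.continuous
  -- the ODE rewritten
  have hode' : ∀ t ≥ (0 : ℝ), deriv s t = s t * (1 - s t) * (K * s t - (d - b)) := by
    intro t ht
    rw [hode t ht, hK]; ring
  -- invariance
  have hinv : ∀ t ≥ (0 : ℝ), s t ∈ Set.Ioo 0 sstar := by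
    by_contra hcon
    push_neg at hcon
    obtain ⟨T0, hT0, hT0n⟩ := hcon
    set E := {t : ℝ | 0 ≤ t ∧ s t ∉ Set.Ioo 0 sstar} with hE
    have hEne : E.Nonempty := ⟨T0, hT0, hT0n⟩
    have hEclosed : IsClosed E := by
      have : E = Set.Ici (0:ℝ) ∩ s ⁻¹' (Set.Ioo 0 sstar)ᶜ := Set.ext fun t => Iff.rfl
      rw [this]
      exact isClosed_Ici.inter ((isOpen_Ioo.preimage hcont).isClosed_compl)
    have hEbdd : BddBelow E := ⟨0, fun x hx => hx.1⟩
    set T := sInf E with hT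
    have hTE : T ∈ E := hEclosed.csInf_mem hEne hEbdd
    have hTnn : 0 ≤ T := hTE.1
    have hTpos : 0 < T := by
      rcases hTnn.lt_or_eq with h | h
      · exact h
      · have h2 := hTE.2
        rw [← h] at h2
        exact absurd (Set.mem_Ioo.mpr ⟨h0l, hinit⟩) h2
    have hbefore : ∀ t, 0 ≤ t → t < T → s t ∈ Set.Ioo 0 sstar := by
      intro t ht htT
      by_contra hno
      exact absurd (csInf_le hEbdd ⟨ht, hno⟩) (not_le.mpr htT)
    have hIcc : ∀ t ∈ Set.Icc (0:ℝ) T, s t ∈ Set.Icc 0 sstar := by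
      have hsub : Set.Icc (0:ℝ) T ⊆ s ⁻¹' (Set.Icc 0 sstar) := by
        rw [← closure_Ico hTpos.ne]
        apply closure_minimal _ (isClosed_Icc.preimage hcont)
        intro t ht
        exact Set.mem_preimage.mpr
          (Set.Ioo_subset_Icc_self (hbefore t ht.1 ht.2))
      intro t ht
      exact hsub ht
    have hsT : s T = 0 ∨ s T = sstar := by
      have h1 := hIcc T ⟨hTnn, le_refl T⟩
      have h2 := hTE.2
      rcases h1.1.lt_or_eq with h | h
      · rcases h1.2.lt_or_eq with h' | h'
        · exact absurd ⟨h, h'⟩ h2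
        · exact Or.inr h'
      · exact Or.inl h.symm
    rcases hsT with hsT | hsT
    · -- s T = 0 : use u t = exp (K t) * s t, monotone nonneg
      set u : ℝ → ℝ := fun t => Real.exp (K * t) * s t with hu
      have hud : ∀ t : ℝ, HasDerivAt u
          (K * Real.exp (K * t) * s t + Real.exp (K * t) * deriv s t) t := by
        intro t
        have hlin : HasDerivAt (fun y : ℝ => K * y) K t := by
          simpa using (hasDerivAt_id t).const_mul K
        have h1 : HasDerivAt (fun y : ℝ => Real.exp (K * y)) (Real.exp (K * t) * K) t :=
          hlin.exp
        have h2 := h1.mul (hs t).hasDerivAt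
        rw [hu]
        exact h2.congr_deriv (by ring)
      have hucont : Continuous u := continuous_iff_continuousAt.mpr fun x => (hud x).differentiableAt.continuousAt
      have hmono : MonotoneOn u (Set.Icc 0 T) := by
        apply monotoneOn_of_deriv_nonneg (convex_Icc 0 T) hucont.continuousOn
          (fun x _ => (hud x).differentiableAt.differentiableWithinAt)
        intro x hx
        rw [interior_Icc] at hx
        rw [(hud x).deriv, hode' x hx.1.le]
        have hsx := hIcc x ⟨hx.1.le, hx.2.le⟩
        have h1 : 0 ≤ s x := hsx.1
        have h2 : s x ≤ sstar := hsx.2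
        have h3 : s x ≤ 1 := h2.trans hsstar1.le
        have hexp : 0 < Real.exp (K * x) := Real.exp_pos _
        have key : 0 ≤ K * s x + s x * (1 - s x) * (K * s x - (d - b)) := by
          nlinarith [mul_nonneg (mul_nonneg hKpos.le (mul_nonneg h1 h1)) (sub_nonneg.mpr h3),
            mul_nonneg (by linarith : (0:ℝ) ≤ d - b) (mul_nonneg h1 h1),
            mul_nonneg (by linarith : (0:ℝ) ≤ a - c) h1]
        nlinarith
      have h1 : u 0 ≤ u T := hmono ⟨le_refl 0, hTnn⟩ ⟨hTnn, le_refl T⟩ hTnn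
      have h2 : u 0 = s 0 := by simp [hu]
      have h3 : u T = 0 := by simp [hu, hsT]
      linarith
    · -- s T = sstar : s is antitone on [0,T], contradiction
      have hanti : AntitoneOn s (Set.Icc 0 T) := by
        apply antitoneOn_of_deriv_nonpos (convex_Icc 0 T) hcont.continuousOn
          (fun x _ => (hs x).differentiableWithinAt)
        intro x hx
        rw [interior_Icc] at hx
        rw [hode' x hx.1.le]
        have hsx := hbefore x hx.1.le hx.2
        have h1 : 0 < s x := hsx.1
        have h2 : s x < sstar := hsx.2
        have h3 : s x < 1 := h2.trans hsstar1
        have hq : K * s x - (d - b) < 0 := by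
          have := (mul_lt_mul_iff_right₀ hKpos).mpr h2
          linarith [hKs]
        exact (mul_neg_of_pos_of_neg (mul_pos h1 (by linarith)) hq).le
      have := hanti ⟨le_refl 0, hTnn⟩ ⟨hTnn, le_refl T⟩ hTnn
      rw [hsT] at this
      linarith
  -- s is strictly decreasing on [0, ∞)
  have hderneg : ∀ t ≥ (0:ℝ), deriv s t < 0 := by
    intro t ht
    rw [hode' t ht]
    obtain ⟨h1, h2⟩ := hinv t ht
    have h3 : s t < 1 := h2.trans hsstar1
    have hq : K * s t - (d - b) < 0 := by
      have := (mul_lt_mul_iff_right₀ hKpos).mpr h2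
      linarith [hKs]
    exact mul_neg_of_pos_of_neg (mul_pos h1 (by linarith)) hq
  have hanti : StrictAntiOn s (Set.Ici 0) := by
    apply strictAntiOn_of_deriv_neg (convex_Ici 0) hcont.continuousOn
    intro x hx
    rw [interior_Ici] at hx
    exact hderneg x hx.le
  -- shifted function, antitone everywhere
  set g : ℝ → ℝ := fun t => s (max t 0) with hg
  have hgA : Antitone g := by
    intro x y hxy
    exact hanti.antitoneOn (le_max_right x 0) (le_max_right y 0)
      (max_le_max hxy le_rfl)
  have hgbdd : BddBelow (Set.range g) := by
    refine ⟨0, ?_⟩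
    rintro z ⟨t, rfl⟩
    exact (hinv _ (le_max_right t 0)).1.le
  have hgt : Filter.Tendsto g Filter.atTop (nhds (⨅ t, g t)) :=
    tendsto_atTop_ciInf hgA hgbdd
  set L : ℝ := ⨅ t, g t with hL
  have hLle : ∀ t ≥ (0:ℝ), L ≤ s t := by
    intro t ht
    have := ciInf_le hgbdd t
    simpa [hg, max_eq_left ht] using this
  have hLnn : 0 ≤ L := le_ciInf fun t => (hinv _ (le_max_right t 0)).1.le
  have hst : Filter.Tendsto s Filter.atTop (nhds L) := by
    apply hgt.congr'
    filter_upwards [Filter.eventually_ge_atTop (0:ℝ)] with t ht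
    simp [hg, max_eq_left ht]
  have hL0 : L = 0 := by
    by_contra hne
    have hLpos : 0 < L := lt_of_le_of_ne hLnn (Ne.symm hne)
    set δ : ℝ := L * (1 - s 0) * ((d - b) - K * s 0) with hδ
    have hs0lt1 : s 0 < 1 := hinit.trans hsstar1
    have hKs0 : K * s 0 < d - b := by
      have : K * s 0 < K * sstar := by
        exact (mul_lt_mul_iff_right₀ hKpos).mpr hinit
      linarith [hKs]
    have hδpos : 0 < δ := by
      apply mul_pos (mul_pos hLpos (by linarith)) (by linarith)
    -- deriv s t ≤ -δ for t ≥ 0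
    have hder : ∀ t ≥ (0:ℝ), deriv s t ≤ -δ := by
      intro t ht
      rw [hode' t ht]
      have h1 : L ≤ s t := hLle t ht
      have h2 : s t ≤ s 0 := by
        rcases ht.lt_or_eq with h | h
        · exact (hanti (Set.mem_Ici.mpr le_rfl) ht.le h).le
        · rw [← h]
      have h3 : s t < 1 := (hinv t ht).2.trans hsstar1
      have hp : L * (1 - s 0) ≤ s t * (1 - s t) := by
        apply mul_le_mul h1 (by linarith) (by linarith) (hinv t ht).1.le
      have hq : K * s t - (d - b) ≤ K * s 0 - (d - b) := by
        have := (mul_le_mul_iff_right₀ hKpos).mpr h2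
        linarith
      have hqneg : K * s 0 - (d - b) < 0 := by linarith
      have hppos : 0 < L * (1 - s 0) := mul_pos hLpos (by linarith)
      calc s t * (1 - s t) * (K * s t - (d - b))
          ≤ s t * (1 - s t) * (K * s 0 - (d - b)) := by
            apply mul_le_mul_of_nonneg_left hq
            nlinarith [(hinv t ht).1]
        _ ≤ L * (1 - s 0) * (K * s 0 - (d - b)) := by
            apply mul_le_mul_of_nonpos_right hp hqneg.le
        _ = -δ := by rw [hδ]; ring
    -- then s t ≤ s 0 - δ t, contradiction for large t
    set v : ℝ → ℝ := fun t => s t + δ * t with hv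
    have hvd : ∀ x : ℝ, HasDerivAt v (deriv s x + δ) x := by
      intro x
      have hlin : HasDerivAt (fun y : ℝ => δ * y) δ x := by
        simpa using (hasDerivAt_id x).const_mul δ
      rw [hv]
      exact (hs x).hasDerivAt.add hlin
    have hvcont : Continuous v := continuous_iff_continuousAt.mpr fun x => (hvd x).differentiableAt.continuousAt
    have hvanti : AntitoneOn v (Set.Ici 0) := by
      apply antitoneOn_of_deriv_nonpos (convex_Ici 0) hvcont.continuousOn
        (fun x _ => (hvd x).differentiableAt.differentiableWithinAt)
      intro x hx
      rw [interior_Ici] at hx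
      rw [(hvd x).deriv]
      linarith [hder x hx.le]
    set t1 : ℝ := (s 0 + 1) / δ with ht1
    have ht1pos : 0 < t1 := div_pos (by linarith) hδpos
    have hvle : v t1 ≤ v 0 := hvanti (Set.mem_Ici.mpr le_rfl) ht1pos.le ht1pos.le
    have hveq : δ * t1 = s 0 + 1 := by
      rw [ht1]; field_simp
    have : s t1 + (s 0 + 1) ≤ s 0 := by
      have := hvle
      simp only [hv] at this
      rw [hveq] at this
      simpa using this
    linarith [(hinv t1 ht1pos.le).1]
  rw [hL0] at hst
  exact ⟨⟨hsstar0, hsstar1⟩, hst⟩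
end

section
/- Suppose a < c and d < b (mixed strategy dominant / hawk–dove case), and let s* = (d − b)/((a − c) + (d − b)), which lies in (0,1). Then s(t) → s* as t → ∞; that is, the interior evolutionarily stable mixed equilibrium attracts every interior solution. -/
open Set Filter Real

/-- Barrier lemma: for the ODE s' = k·s(1-s)(p-s) with 0 < k, if s starts ≤ M where
p ≤ M, 0 < M, and M < M' < 1, then s stays ≤ M for all t ≥ 0. -/
lemma aux_ub (k p : ℝ) (hk : 0 < k)
    (s : ℝ → ℝ) (hs : Differentiable ℝ s)
    (hode : ∀ t ≥ (0:ℝ), deriv s t = k * (s t * (1 - s t) * (p - s t)))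
    (M M' : ℝ) (h0M : 0 < M) (hpM : p ≤ M) (hMM' : M < M') (hM'1 : M' < 1)
    (hs0 : s 0 ≤ M) : ∀ t ≥ (0:ℝ), s t ≤ M := by
  by_contra hcon
  push_neg at hcon
  obtain ⟨t1', ht1'0, ht1'⟩ := hcon
  -- Step 1: find t1 > 0 with M < s t1 and s ≤ M' on [0, t1]
  have key : ∃ t1 > (0:ℝ), M < s t1 ∧ ∀ u ∈ Icc (0:ℝ) t1, s u ≤ M' := by
    by_cases hA : ∃ t ≥ (0:ℝ), M' ≤ s t
    · obtain ⟨ta, hta0, htaM⟩ := hA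
      set A : Set ℝ := {t | 0 ≤ t ∧ M' ≤ s t} with hAdef
      have hAclosed : IsClosed A := by
        have : A = Ici 0 ∩ s ⁻¹' (Ici M') := by ext x; simp [hAdef]
        rw [this]
        exact isClosed_Ici.inter (isClosed_Ici.preimage hs.continuous)
      have hAne : A.Nonempty := ⟨ta, hta0, htaM⟩
      have hAbdd : BddBelow A := ⟨0, fun x hx => hx.1⟩
      have htst : sInf A ∈ A := hAclosed.csInf_mem hAne hAbdd
      set t1 := sInf A with ht1def
      have ht1pos : 0 < t1 := by
        rcases lt_or_eq_of_le htst.1 with h | h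
        · exact h
        · exfalso; rw [← h] at htst; linarith [htst.2]
      have hbefore : ∀ u, 0 ≤ u → u < t1 → s u < M' := by
        intro u hu0 hu
        by_contra h
        push_neg at h
        have : u ∈ A := ⟨hu0, h⟩
        exact absurd (csInf_le hAbdd this) (not_le.mpr hu)
      -- s t1 = M' by continuity from the left
      have hle : s t1 ≤ M' := by
        have htend : Tendsto s (nhdsWithin t1 (Iio t1)) (nhds (s t1)) :=
          (hs.continuous.tendsto t1).mono_left nhdsWithin_le_nhds
        refine le_of_tendsto htend ?_
        filter_upwards [Ioo_mem_nhdsLT_of_mem (⟨ht1pos, le_refl t1⟩ : t1 ∈ Ioc 0 t1)]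
          with u hu
        exact (hbefore u hu.1.le hu.2).le
      refine ⟨t1, ht1pos, lt_of_lt_of_le hMM' htst.2, ?_⟩
      intro u hu
      rcases lt_or_eq_of_le hu.2 with h | h
      · exact (hbefore u hu.1 h).le
      · rw [h]; exact hle
    · push_neg at hA
      have ht1'pos : 0 < t1' := by
        rcases lt_or_eq_of_le ht1'0 with h | h
        · exact h
        · exfalso; rw [← h] at ht1'; linarith
      exact ⟨t1', ht1'pos, ht1', fun u hu => (hA u hu.1).le⟩
  obtain ⟨t1, ht1pos, ht1M, ht1M'⟩ := key
  -- Step 2: last time before t1 at which s ≤ M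
  set B : Set ℝ := Icc 0 t1 ∩ s ⁻¹' (Iic M) with hBdef
  have hBclosed : IsClosed B := isClosed_Icc.inter (isClosed_Iic.preimage hs.continuous)
  have hBne : B.Nonempty := ⟨0, ⟨le_refl 0, ht1pos.le⟩, hs0⟩
  have hBbdd : BddAbove B := ⟨t1, fun x hx => hx.1.2⟩
  have ht0 : sSup B ∈ B := hBclosed.csSup_mem hBne hBbdd
  set t0 := sSup B with ht0def
  have ht00 : 0 ≤ t0 := ht0.1.1
  have ht0t1 : t0 ≤ t1 := ht0.1.2
  have hst0 : s t0 ≤ M := ht0.2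
  have ht0lt : t0 < t1 := by
    rcases lt_or_eq_of_le ht0t1 with h | h
    · exact h
    · exfalso; rw [h] at hst0; linarith
  have hafter : ∀ u, t0 < u → u ≤ t1 → M < s u := by
    intro u hu hu1
    by_contra h
    push_neg at h
    have : u ∈ B := ⟨⟨le_trans ht00 (le_of_lt hu), hu1⟩, h⟩
    exact absurd (le_csSup hBbdd this) (not_le.mpr hu)
  -- Step 3: s is antitone on [t0, t1]
  have hanti : AntitoneOn s (Icc t0 t1) := by
    apply antitoneOn_of_deriv_nonpos (convex_Icc t0 t1) hs.continuous.continuousOn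
      hs.differentiableOn
    intro x hx
    rw [interior_Icc] at hx
    have hx0 : 0 ≤ x := le_trans ht00 hx.1.le
    rw [hode x hx0]
    have h1 : M < s x := hafter x hx.1 hx.2.le
    have h2 : s x ≤ M' := ht1M' x ⟨hx0, hx.2.le⟩
    have : s x * (1 - s x) * (p - s x) ≤ 0 := by
      apply mul_nonpos_of_nonneg_of_nonpos
      · apply mul_nonneg <;> nlinarith
      · linarith
    nlinarith
  have : s t1 ≤ s t0 :=
    hanti ⟨le_refl t0, ht0t1⟩ ⟨ht0t1, le_refl t1⟩ ht0t1
  linarith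

theorem stmt_14 (a b c d : ℝ) (hac : a < c) (hdb : d < b)
    (s : ℝ → ℝ) (hs : Differentiable ℝ s)
    (hode : ∀ t ≥ (0 : ℝ), deriv s t =
      s t * (1 - s t) * ((a - c) * s t + (b - d) * (1 - s t)))
    (h0 : s 0 ∈ Set.Ioo (0 : ℝ) 1)
    (sstar : ℝ) (hsstar : sstar = (d - b) / ((a - c) + (d - b))) :
    sstar ∈ Set.Ioo (0 : ℝ) 1 ∧ Filter.Tendsto s Filter.atTop (nhds sstar) := by
  set k : ℝ := (c - a) + (b - d) with hkdef
  have hk : 0 < k := by simp [hkdef]; linarith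
  have hknz : ((a - c) + (d - b)) ≠ 0 := by intro h; apply hk.ne'; linarith
  have hsstar' : sstar = (b - d) / k := by
    rw [hsstar, hkdef]
    rw [div_eq_div_iff hknz hk.ne']
    ring
  have hstar : sstar ∈ Set.Ioo (0:ℝ) 1 := by
    rw [hsstar']
    constructor
    · apply div_pos (by linarith) hk
    · rw [div_lt_one hk]; simp [hkdef]; linarith
  have hksstar : k * sstar = b - d := by
    rw [hsstar']; field_simp
  have hode' : ∀ t ≥ (0:ℝ), deriv s t = k * (s t * (1 - s t) * (sstar - s t)) := by
    intro t ht
    rw [hode t ht]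
    have : (a - c) * s t + (b - d) * (1 - s t) = k * (sstar - s t) := by
      have := hksstar
      simp only [hkdef] at this ⊢
      nlinarith [this]
    rw [this]; ring
  set m : ℝ := min (s 0) sstar with hmdef
  set M : ℝ := max (s 0) sstar with hMdef
  have hm0 : 0 < m := lt_min h0.1 hstar.1
  have hM1 : M < 1 := max_lt h0.2 hstar.2
  have hmM : m ≤ M := min_le_max
  have hsstarM : sstar ≤ M := le_max_right _ _
  have hmsstar : m ≤ sstar := min_le_right _ _
  have hM0 : 0 < M := lt_of_lt_of_le hm0 hmM
  have hm1 : m < 1 := lt_of_le_of_lt hmM hM1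
  -- upper bound
  have hub : ∀ t ≥ (0:ℝ), s t ≤ M := by
    apply aux_ub k sstar hk s hs hode' M ((M + 1)/2) hM0 hsstarM (by linarith) (by linarith)
      (le_max_left _ _)
  -- lower bound via u = 1 - s
  have hlb : ∀ t ≥ (0:ℝ), m ≤ s t := by
    set u : ℝ → ℝ := fun t => 1 - s t with hudef
    have hsu : Differentiable ℝ u := (differentiable_const 1).sub hs
    have hderivu : ∀ t, deriv u t = - deriv s t := by
      intro t
      simp [hudef, deriv_const_sub]
    have hodeU : ∀ t ≥ (0:ℝ), deriv u t = k * (u t * (1 - u t) * ((1 - sstar) - u t)) := by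
      intro t ht
      rw [hderivu t, hode' t ht]
      simp only [hudef]
      ring
    have := aux_ub k (1 - sstar) hk u hsu hodeU (1 - m) ((1 - m + 1)/2)
      (by linarith) (by linarith) (by linarith) (by linarith)
      (by simp [hudef]; linarith [min_le_left (s 0) sstar])
    intro t ht
    have := this t ht
    simp only [hudef] at this
    linarith
  -- Lyapunov function
  set K : ℝ := 2 * k * (m * (1 - M)) with hKdef
  have hK : 0 < K := by
    apply mul_pos (by linarith) (mul_pos hm0 (by linarith))
  set g : ℝ → ℝ := fun t => (s t - sstar)^2 * Real.exp (K * t) with hgdef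
  have hV : ∀ t, HasDerivAt (fun t => (s t - sstar)^2) (2 * (s t - sstar) * deriv s t) t := by
    intro t
    have h1 : HasDerivAt (fun t => s t - sstar) (deriv s t) t :=
      ((hs t).hasDerivAt).sub_const sstar
    have := h1.fun_pow 2
    refine this.congr_deriv ?_
    ring
  have hE : ∀ t, HasDerivAt (fun t => Real.exp (K * t)) (K * Real.exp (K * t)) t := by
    intro t
    have h1 : HasDerivAt (fun t : ℝ => K * t) K t := by
      simpa using (hasDerivAt_id t).const_mul K
    have := h1.exp
    convert this using 1
    ring
  have hg : ∀ t, HasDerivAt g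
      (2 * (s t - sstar) * deriv s t * Real.exp (K * t)
        + (s t - sstar)^2 * (K * Real.exp (K * t))) t := by
    intro t
    exact (hV t).mul (hE t)
  have hganti : AntitoneOn g (Ici (0:ℝ)) := by
    apply antitoneOn_of_deriv_nonpos (convex_Ici 0)
      (fun t _ => ((hg t).continuousAt).continuousWithinAt)
      (fun t ht => ((hg t).differentiableAt).differentiableWithinAt)
    intro x hx
    rw [interior_Ici] at hx
    have hx0 : (0:ℝ) ≤ x := hx.le
    rw [(hg x).deriv]
    have hsx1 : s x ≤ M := hub x hx0
    have hsx2 : m ≤ s x := hlb x hx0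
    have hexp : 0 < Real.exp (K * x) := Real.exp_pos _
    have hds : deriv s x = k * (s x * (1 - s x) * (sstar - s x)) := hode' x hx0
    rw [hds]
    have hkey : 2 * (s x - sstar) * (k * (s x * (1 - s x) * (sstar - s x)))
        + (s x - sstar)^2 * K ≤ 0 := by
      have h1 : m * (1 - M) ≤ s x * (1 - s x) := by nlinarith
      have h2 : (m * (1 - M)) * (s x - sstar)^2 ≤ (s x * (1 - s x)) * (s x - sstar)^2 :=
        mul_le_mul_of_nonneg_right h1 (sq_nonneg _)
      nlinarith [h2, hk]
    nlinarith [hexp]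
  have hVbound : ∀ t ≥ (0:ℝ), (s t - sstar)^2 ≤ (s 0 - sstar)^2 * Real.exp (-(K * t)) := by
    intro t ht
    have := hganti (self_mem_Ici) (mem_Ici.mpr ht) ht
    simp only [hgdef] at this
    rw [mul_zero, Real.exp_zero, mul_one] at this
    have hexp : 0 < Real.exp (K * t) := Real.exp_pos _
    rw [Real.exp_neg]
    have h2 : (s t - sstar)^2 * Real.exp (K * t) ≤ (s 0 - sstar)^2 := this
    calc (s t - sstar)^2 = (s t - sstar)^2 * Real.exp (K * t) * (Real.exp (K * t))⁻¹ := by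
          field_simp
      _ ≤ (s 0 - sstar)^2 * (Real.exp (K * t))⁻¹ := by
          apply mul_le_mul_of_nonneg_right h2 (by positivity)
  have htendV : Tendsto (fun t => (s t - sstar)^2) atTop (nhds 0) := by
    have hupper : Tendsto (fun t => (s 0 - sstar)^2 * Real.exp (-(K * t))) atTop (nhds 0) := by
      have h1 : Tendsto (fun t : ℝ => K * t) atTop atTop :=
        Tendsto.const_mul_atTop hK tendsto_id
      have h2 : Tendsto (fun t : ℝ => -(K * t)) atTop atBot := tendsto_neg_atTop_atBot.comp h1
      have h3 : Tendsto (fun t : ℝ => Real.exp (-(K * t))) atTop (nhds 0) :=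
        Real.tendsto_exp_atBot.comp h2
      simpa using h3.const_mul ((s 0 - sstar)^2)
    apply tendsto_of_tendsto_of_tendsto_of_le_of_le' tendsto_const_nhds hupper
    · filter_upwards with t using sq_nonneg _
    · filter_upwards [eventually_ge_atTop (0:ℝ)] with t ht using hVbound t ht
  have htendabs : Tendsto (fun t => |s t - sstar|) atTop (nhds 0) := by
    have h1 : Tendsto (fun t => Real.sqrt ((s t - sstar)^2)) atTop (nhds (Real.sqrt 0)) :=
      (Real.continuous_sqrt.tendsto 0).comp htendV
    rw [Real.sqrt_zero] at h1
    simpa [Real.sqrt_sq_eq_abs] using h1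
  refine ⟨hstar, ?_⟩
  rw [← tendsto_sub_nhds_zero_iff]
  exact tendsto_zero_iff_abs_tendsto_zero _ |>.mpr htendabs
end

section
/- Let q > 0 and let B₁, B₂, σ₁, σ₂ be real numbers such that −B₁ − σ₁²/2 > 0, −B₂ − σ₂²/2 < 0, and (−B₁ − σ₁²/2) > |−B₂ − σ₂²/2| (the instability of x = 0 in environment 1 is strictly stronger than its stability in environment 2). Then there exist α ∈ (0,1) and real numbers c₁, c₂ with 1 + αc₁ > 0 and 1 + αc₂ > 0 such that −B₁ + ((−α − 1)/2)·σ₁² + q·(c₁ − c₂)/(1 + αc₁) > 0 and −B₂ + ((−α − 1)/2)·σ₂² + q·(c₂ − c₁)/(1 + αc₂) > 0; that is, Assumption (ii) for instability of the vertex x = 0 holds for the two-state switched dynamic with equal transition rates q₁₂ = q₂₁ = q. -/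
theorem stmt_18 (q B₁ B₂ σ₁ σ₂ : ℝ) (hq : 0 < q)
    (h₁ : -B₁ - σ₁ ^ 2 / 2 > 0) (h₂ : -B₂ - σ₂ ^ 2 / 2 < 0)
    (h₃ : -B₁ - σ₁ ^ 2 / 2 > |-B₂ - σ₂ ^ 2 / 2|) :
    ∃ α ∈ Set.Ioo (0 : ℝ) 1, ∃ c₁ c₂ : ℝ,
      1 + α * c₁ > 0 ∧ 1 + α * c₂ > 0 ∧
      -B₁ + ((-α - 1) / 2) * σ₁ ^ 2 + q * (c₁ - c₂) / (1 + α * c₁) > 0 ∧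
      -B₂ + ((-α - 1) / 2) * σ₂ ^ 2 + q * (c₂ - c₁) / (1 + α * c₂) > 0 := by
  have habs : |-B₂ - σ₂ ^ 2 / 2| = -(-B₂ - σ₂ ^ 2 / 2) := abs_of_neg h₂
  rw [habs] at h₃
  set L₁ : ℝ := -B₁ - σ₁ ^ 2 / 2 with hL₁
  set L₂ : ℝ := -B₂ - σ₂ ^ 2 / 2 with hL₂
  clear_value L₁ L₂
  set ε : ℝ := (L₁ + L₂) / 2 with hε
  clear_value ε
  have hεpos : 0 < ε := by rw [hε]; linarith
  set c₂ : ℝ := (ε - L₂) / q with hc₂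
  have hc₂pos : 0 < c₂ := div_pos (by linarith) hq
  have hqc₂ : q * c₂ = ε - L₂ := by
    rw [hc₂]; field_simp
  clear_value c₂
  have hK₁pos : (0:ℝ) < σ₁ ^ 2 / 2 + 1 := by positivity
  have hK₂pos : (0:ℝ) < σ₂ ^ 2 / 2 + c₂ * σ₂ ^ 2 / 2 - c₂ * L₂ + 1 := by nlinarith
  set α : ℝ := min (1/2) (min (ε / (σ₁ ^ 2 / 2 + 1))
      (ε / (σ₂ ^ 2 / 2 + c₂ * σ₂ ^ 2 / 2 - c₂ * L₂ + 1))) with hα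
  have hα0 : 0 < α :=
    lt_min (by norm_num) (lt_min (div_pos hεpos hK₁pos) (div_pos hεpos hK₂pos))
  have hα1 : α < 1 := lt_of_le_of_lt (min_le_left _ _) (by norm_num)
  have hαs₁ : α * (σ₁ ^ 2 / 2 + 1) ≤ ε := by
    have h2 : α ≤ ε / (σ₁ ^ 2 / 2 + 1) := by
      rw [hα]; exact le_trans (min_le_right _ _) (min_le_left _ _)
    calc α * (σ₁ ^ 2 / 2 + 1) ≤ (ε / (σ₁ ^ 2 / 2 + 1)) * (σ₁ ^ 2 / 2 + 1) := by nlinarith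
    _ = ε := div_mul_cancel₀ _ (ne_of_gt hK₁pos)
  have hαs₂ : α * (σ₂ ^ 2 / 2 + c₂ * σ₂ ^ 2 / 2 - c₂ * L₂ + 1) ≤ ε := by
    have h2 : α ≤ ε / (σ₂ ^ 2 / 2 + c₂ * σ₂ ^ 2 / 2 - c₂ * L₂ + 1) := by
      rw [hα]; exact le_trans (min_le_right _ _) (min_le_right _ _)
    calc α * (σ₂ ^ 2 / 2 + c₂ * σ₂ ^ 2 / 2 - c₂ * L₂ + 1)
        ≤ (ε / (σ₂ ^ 2 / 2 + c₂ * σ₂ ^ 2 / 2 - c₂ * L₂ + 1))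
          * (σ₂ ^ 2 / 2 + c₂ * σ₂ ^ 2 / 2 - c₂ * L₂ + 1) := by nlinarith
    _ = ε := div_mul_cancel₀ _ (ne_of_gt hK₂pos)
  clear_value α
  have hD : (0:ℝ) < 1 + α * c₂ := by nlinarith
  refine ⟨α, ⟨hα0, hα1⟩, 0, c₂, by norm_num, hD, ?_, ?_⟩
  · simp only [mul_zero, add_zero, div_one]
    have hB₁ : -B₁ = L₁ + σ₁ ^ 2 / 2 := by rw [hL₁]; ring
    nlinarith [hαs₁, hqc₂, hα0, hεpos]
  · have key : -B₂ + ((-α - 1) / 2) * σ₂ ^ 2 + q * (c₂ - 0) / (1 + α * c₂)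
        = ((-B₂ + ((-α - 1) / 2) * σ₂ ^ 2) * (1 + α * c₂) + q * c₂) / (1 + α * c₂) := by
      field_simp
      try ring
    rw [key]
    apply div_pos ?_ hD
    have hB₂ : -B₂ = L₂ + σ₂ ^ 2 / 2 := by rw [hL₂]; ring
    nlinarith [hαs₂, hqc₂, hα0, hα1, hc₂pos, hεpos,
      mul_nonneg (mul_nonneg (mul_pos hα0 hc₂pos).le (sq_nonneg σ₂))
        (by linarith : (0:ℝ) ≤ 1 - α)]
end
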